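/- arXiv:2409.17965 — 4 statements merged into one kernel-verified Lean document; each statement's English description precedes it below -/
import Mathlib

section
/- Let R be a commutative ring and f : M → N an injective pure map of R-modules whose cokernel N/f(M) is a finitely presented R-module. Then f splits, i.e., there exists an R-module map s : N → M with s ∘ f = id_M. -/
universe u

open TensorProduct

lemma pi_eq_sum_single_smul {R : Type u} [CommRing R] {n : ℕ} (c : Fin n → R) :
    c = ∑ j, c j • (Pi.single j (1 : R) : Fin n → R) := by
  conv_lhs => rw [← Finset.univ_sum_single c]
  refine Finset.sum_congr rfl fun j _ => ?_
  rw [← Pi.single_smul, smul_eq_mul, mul_one]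

/-- Every element of `(Fin n → R) ⊗ M` is a sum `∑ j, eⱼ ⊗ mⱼ`. -/
lemma exists_pi_tensor_repr {R M : Type u} [CommRing R] [AddCommGroup M] [Module R M]
    {n : ℕ} (z : (Fin n → R) ⊗[R] M) :
    ∃ m : Fin n → M, z = ∑ j, Pi.single j (1 : R) ⊗ₜ[R] m j := by
  induction z using TensorProduct.induction_on with
  | zero => exact ⟨0, by simp⟩
  | tmul c x =>
    refine ⟨fun j => c j • x, ?_⟩
    conv_lhs => rw [pi_eq_sum_single_smul c, TensorProduct.sum_tmul]
    exact Finset.sum_congr rfl fun j _ => TensorProduct.smul_tmul _ _ _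
  | add x y hx hy =>
    obtain ⟨mx, rfl⟩ := hx
    obtain ⟨my, rfl⟩ := hy
    exact ⟨mx + my, by simp [TensorProduct.tmul_add, Finset.sum_add_distrib]⟩

/-- An `R`-module map `f : M → N` is *pure* if for every `R`-module `P` the induced map
`P ⊗[R] M → P ⊗[R] N` is injective. -/
def IsPureMap {R M N : Type u} [CommRing R] [AddCommGroup M] [Module R M]
    [AddCommGroup N] [Module R N] (f : M →ₗ[R] N) : Prop :=
  ∀ (P : Type u) [AddCommGroup P] [Module R P], Function.Injective (LinearMap.lTensor P f)

/-- An injective pure map of `R`-modules with finitely presented cokernel splits. -/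
theorem IsPureMap.splits_of_finitePresentation_cokernel {R M N : Type u} [CommRing R]
    [AddCommGroup M] [Module R M] [AddCommGroup N] [Module R N]
    (f : M →ₗ[R] N) (hinj : Function.Injective f) (hpure : IsPureMap f)
    [Module.FinitePresentation R (N ⧸ LinearMap.range f)] :
    ∃ s : N →ₗ[R] M, s ∘ₗ f = LinearMap.id := by
  classical
  set Q := N ⧸ LinearMap.range f with hQ
  set π : N →ₗ[R] Q := (LinearMap.range f).mkQ with hπdef
  -- a finite presentation of Q
  obtain ⟨n, p, hp⟩ := Module.Finite.exists_fin' R Q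
  have hfgker : (LinearMap.ker p).FG := Module.FinitePresentation.fg_ker p hp
  obtain ⟨k, v, hv⟩ := Submodule.fg_iff_exists_fin_generating_family.mp hfgker
  -- lift p through π using projectivity of the free module
  obtain ⟨ρ, hρ⟩ := Module.projective_lifting_property π p
    (Submodule.mkQ_surjective _)
  -- the relations land in the range of f
  have hvi : ∀ i, ρ (v i) ∈ LinearMap.range f := by
    intro i
    have h0 : π (ρ (v i)) = 0 := by
      rw [← LinearMap.comp_apply, hρ]
      have : v i ∈ LinearMap.ker p := hv ▸ Submodule.subset_span ⟨i, rfl⟩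
      exact this
    rwa [hπdef, Submodule.mkQ_apply, Submodule.Quotient.mk_eq_zero] at h0
  choose x hx using hvi
  -- purity: solve the system ∑ j, v i j • m j = x i in M
  set g : (Fin n → R) →ₗ[R] (Fin k → R) := (Matrix.of fun i j => v i j).mulVecLin with hg
  have hge : ∀ j, g (Pi.single j 1) = fun i => v i j := by
    intro j; ext i; simp [hg, Matrix.mulVecLin_apply, Matrix.mulVec_single]
  set P := (Fin k → R) ⧸ LinearMap.range g with hP
  set q : (Fin k → R) →ₗ[R] P := (LinearMap.range g).mkQ with hqdef
  set u : (Fin k → R) ⊗[R] M := ∑ i, Pi.single i (1 : R) ⊗ₜ[R] x i with hu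
  have key : LinearMap.lTensor P f (LinearMap.rTensor M q u) = 0 := by
    rw [hu, map_sum, map_sum]
    have : ∀ i, LinearMap.lTensor P f (LinearMap.rTensor M q
        (Pi.single i (1 : R) ⊗ₜ[R] x i)) = q (Pi.single i 1) ⊗ₜ[R] ρ (v i) := by
      intro i
      simp [LinearMap.rTensor_tmul, LinearMap.lTensor_tmul, hx]
    rw [Finset.sum_congr rfl fun i _ => this i]
    have hvrw : ∀ i, ρ (v i) = ∑ j, v i j • ρ (Pi.single j 1) := by
      intro i
      conv_lhs => rw [pi_eq_sum_single_smul (v i)]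
      simp [map_sum]
    calc ∑ i, q (Pi.single i 1) ⊗ₜ[R] ρ (v i)
        = ∑ i, ∑ j, q (Pi.single i 1) ⊗ₜ[R] (v i j • ρ (Pi.single j 1)) := by
          refine Finset.sum_congr rfl fun i _ => ?_
          rw [hvrw i, TensorProduct.tmul_sum]
      _ = ∑ j, (∑ i, v i j • q (Pi.single i 1)) ⊗ₜ[R] ρ (Pi.single j 1) := by
          rw [Finset.sum_comm]
          refine Finset.sum_congr rfl fun j _ => ?_
          rw [TensorProduct.sum_tmul]
          exact Finset.sum_congr rfl fun i _ => by rw [TensorProduct.smul_tmul]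
      _ = 0 := by
          refine Finset.sum_eq_zero fun j _ => ?_
          have h1 : q (g (Pi.single j 1)) = ∑ i, v i j • q (Pi.single i 1) := by
            rw [hge j]
            conv_lhs => rw [pi_eq_sum_single_smul (fun i => v i j)]
            simp
          have h2 : q (g (Pi.single j 1)) = 0 := by
            rw [hqdef, Submodule.mkQ_apply, Submodule.Quotient.mk_eq_zero]
            exact ⟨Pi.single j 1, rfl⟩
          rw [← h1, h2, TensorProduct.zero_tmul]
  have hu0 : LinearMap.rTensor M q u = 0 := by
    apply hpure P
    simpa using key
  -- exactness of rTensor gives a preimage z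
  have hexact : Function.Exact (LinearMap.rTensor M g) (LinearMap.rTensor M q) :=
    rTensor_exact M (LinearMap.exact_map_mkQ_range g) (Submodule.mkQ_surjective _)
  obtain ⟨z, hz⟩ := (hexact u).mp hu0
  obtain ⟨m, rfl⟩ := exists_pi_tensor_repr z
  -- extract coordinates: x i = ∑ j, v i j • m j
  have hxm : ∀ i, x i = ∑ j, v i j • m j := by
    intro i
    set φ : (Fin k → R) ⊗[R] M →ₗ[R] M :=
      TensorProduct.lift ((LinearMap.lsmul R M).comp (LinearMap.proj i)) with hφ
    have happ : φ (LinearMap.rTensor M g (∑ j, Pi.single j (1 : R) ⊗ₜ[R] m j)) = φ u := by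
      rw [hz]
    have h1 : φ u = x i := by
      rw [hu, map_sum]
      rw [Finset.sum_eq_single i]
      · simp [φ]
      · intro b _ hb
        simp [φ, TensorProduct.lift.tmul, Pi.single_apply, hb]
      · intro h; exact absurd (Finset.mem_univ i) h
    have h2 : φ (LinearMap.rTensor M g (∑ j, Pi.single j (1 : R) ⊗ₜ[R] m j))
        = ∑ j, v i j • m j := by
      rw [map_sum, map_sum]
      refine Finset.sum_congr rfl fun j _ => ?_
      rw [LinearMap.rTensor_tmul, hge j]
      simp [φ, TensorProduct.lift.tmul]
    rw [← h1, ← happ, h2]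
  -- build the retraction
  set μ : (Fin n → R) →ₗ[R] M := Fintype.linearCombination R m with hμ
  set τ : (Fin n → R) →ₗ[R] N := ρ - f ∘ₗ μ with hτ
  have hτv : ∀ i, τ (v i) = 0 := by
    intro i
    have hμv : μ (v i) = x i := by
      rw [hμ, Fintype.linearCombination_apply, ← hxm i]
    simp [hτ, hμv, hx]
  have hker : LinearMap.ker p ≤ LinearMap.ker τ := by
    rw [← hv]
    rw [Submodule.span_le]
    rintro _ ⟨i, rfl⟩
    exact hτv i
  -- σ : Q →ₗ N with σ ∘ p = τ
  set e := LinearMap.quotKerEquivOfSurjective p hp with he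
  set σ : Q →ₗ[R] N := (Submodule.liftQ (LinearMap.ker p) τ hker) ∘ₗ
    (e.symm : Q →ₗ[R] (Fin n → R) ⧸ LinearMap.ker p) with hσ
  have hσp : ∀ c, σ (p c) = τ c := by
    intro c
    have : e (Submodule.Quotient.mk c) = p c := rfl
    rw [hσ]
    simp only [LinearMap.comp_apply]
    rw [← this, LinearEquiv.coe_coe, LinearEquiv.symm_apply_apply]
    exact Submodule.liftQ_apply _ _ _
  have hπσ : ∀ y : Q, π (σ y) = y := by
    intro y
    obtain ⟨c, rfl⟩ := hp y
    rw [hσp c, hτ]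
    simp only [LinearMap.sub_apply, map_sub, LinearMap.comp_apply]
    have : π (f (μ c)) = 0 := by
      rw [hπdef, Submodule.mkQ_apply, Submodule.Quotient.mk_eq_zero]
      exact ⟨μ c, rfl⟩
    rw [this, sub_zero, ← LinearMap.comp_apply, hρ]
  -- now define s
  have hmem : ∀ y : N, y - σ (π y) ∈ LinearMap.range f := by
    intro y
    have h0 : π (y - σ (π y)) = 0 := by
      rw [map_sub, hπσ (π y), sub_self]
    rwa [hπdef, Submodule.mkQ_apply, Submodule.Quotient.mk_eq_zero] at h0
  set r : N →ₗ[R] N := LinearMap.id - σ ∘ₗ π with hr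
  have hrmem : ∀ y, r y ∈ LinearMap.range f := fun y => hmem y
  set eM : M ≃ₗ[R] LinearMap.range f := LinearEquiv.ofInjective f hinj with heM
  refine ⟨(eM.symm : LinearMap.range f →ₗ[R] M) ∘ₗ r.codRestrict _ hrmem, ?_⟩
  ext mm
  simp only [LinearMap.comp_apply, LinearMap.codRestrict_apply, LinearMap.id_apply]
  have hrf : r (f mm) = f mm := by
    have : π (f mm) = 0 := by
      rw [hπdef, Submodule.mkQ_apply, Submodule.Quotient.mk_eq_zero]
      exact ⟨mm, rfl⟩
    simp [hr, this]
  have : (⟨r (f mm), hrmem (f mm)⟩ : LinearMap.range f) = eM mm := by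
    ext
    simp [hrf, heM]
  rw [LinearEquiv.coe_coe]
  rw [show (r.codRestrict _ hrmem) (f mm) = eM mm from Subtype.ext (by simp [hrf, heM])]
  exact eM.symm_apply_apply mm
end

section
/- Let (R, m) be a Noetherian local ring with injective hull E of the residue field R/m, let M be an R-module, and let f : R → M be an R-module map. If the induced map E ≅ R ⊗_R E → M ⊗_R E is injective, then f is a pure map of R-modules. If moreover R is m-adically complete, then f splits as a map of R-modules. -/
universe u

/-- `E`, together with an embedding `ι` of the residue field, is an injective hull of the
residue field of the local ring `R`: `E` is an injective `R`-module, `ι` is injective, and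
the image of `ι` is an essential submodule of `E`. -/
def IsInjectiveHullOfResidueField (R : Type u) [CommRing R] [IsLocalRing R]
    (E : Type u) [AddCommGroup E] [Module R E]
    (ι : (R ⧸ IsLocalRing.maximalIdeal R) →ₗ[R] E) : Prop :=
  Module.Injective R E ∧ Function.Injective ι ∧
    ∀ S : Submodule R E, S ≠ ⊥ → S ⊓ LinearMap.range ι ≠ ⊥

open IsLocalRing TensorProduct

namespace InjHullAux

variable {R : Type u} [CommRing R] [IsLocalRing R]
  {E : Type u} [AddCommGroup E] [Module R E]
  {ι : (R ⧸ IsLocalRing.maximalIdeal R) →ₗ[R] E}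

/-- E is a cogenerator: any nonzero element of any module admits a functional to `E`
not vanishing on it. -/
theorem cogen (hE : IsInjectiveHullOfResidueField R E ι)
    {P : Type u} [AddCommGroup P] [Module R P] {p : P} (hp : p ≠ 0) :
    ∃ φ : P →ₗ[R] E, φ p ≠ 0 := by
  classical
  set t : R →ₗ[R] P := LinearMap.toSpanSingleton R P p with ht
  have hker : LinearMap.ker t ≤ maximalIdeal R := by
    apply le_maximalIdeal
    intro h
    have h1 : (1 : R) ∈ LinearMap.ker t := h ▸ Submodule.mem_top
    rw [LinearMap.mem_ker, ht, LinearMap.toSpanSingleton_apply, one_smul] at h1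
    exact hp h1
  have hq : LinearMap.ker t ≤ Submodule.comap (LinearMap.id : R →ₗ[R] R) (maximalIdeal R) := hker
  set q1 : (R ⧸ LinearMap.ker t) →ₗ[R] (R ⧸ maximalIdeal R) :=
    Submodule.mapQ _ _ LinearMap.id hq with hq1
  set e1 := t.quotKerEquivRange with he1
  set f' : ↥(LinearMap.range t) →ₗ[R] E := ι ∘ₗ q1 ∘ₗ (e1.symm : _ →ₗ[R] _) with hf'
  obtain ⟨h, hh⟩ := hE.1.out (LinearMap.range t).subtype (Submodule.injective_subtype _) f'
  have hpmem : p ∈ LinearMap.range t := ⟨1, by simp [ht]⟩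
  refine ⟨h, ?_⟩
  have h2 : h p = f' ⟨p, hpmem⟩ := hh ⟨p, hpmem⟩
  have h3 : e1.symm ⟨p, hpmem⟩ = Submodule.Quotient.mk 1 := by
    apply e1.injective
    rw [LinearEquiv.apply_symm_apply]
    apply Subtype.ext
    show p = (e1 (Submodule.Quotient.mk 1) : P)
    rw [he1, LinearMap.quotKerEquivRange_apply_mk]
    simp [ht]
  rw [h2, hf']
  simp only [LinearMap.coe_comp, Function.comp_apply, LinearEquiv.coe_coe, h3]
  rw [Submodule.mapQ_apply]
  intro hzero
  have := hE.2.1 (by rw [hzero, map_zero] : ι (Submodule.Quotient.mk (LinearMap.id (1:R))) = ι 0)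
  rw [Submodule.Quotient.mk_eq_zero] at this
  simp only [LinearMap.id_coe, id_eq] at this
  exact (Ideal.IsMaximal.ne_top (maximalIdeal.isMaximal R)) (Ideal.eq_top_iff_one _ |>.mpr this)

variable (R E) in
/-- The submodule of elements killed by `m^n`. -/
def En (n : ℕ) : Submodule R E where
  carrier := {e | ∀ x ∈ (maximalIdeal R) ^ n, x • e = 0}
  add_mem' := by
    intro a b ha hb x hx
    rw [smul_add, ha x hx, hb x hx, add_zero]
  zero_mem' := fun x _ => smul_zero x
  smul_mem' := by
    intro r e he x hx
    rw [smul_comm, he x hx, smul_zero]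

theorem mem_En {n : ℕ} {e : E} : e ∈ En R E n ↔ ∀ x ∈ (maximalIdeal R) ^ n, x • e = 0 :=
  Iff.rfl

theorem En_mono {a b : ℕ} (h : a ≤ b) : En R E a ≤ En R E b := by
  intro e he x hx
  exact he x (Ideal.pow_le_pow_right h hx)

theorem En_zero : En R E 0 = ⊥ := by
  apply le_antisymm
  · intro e he
    have := he 1 (by simp)
    rw [one_smul] at this
    simp [this]
  · exact bot_le

/-- Every element of `E` is annihilated by a power of the maximal ideal. -/
theorem torsion [IsNoetherianRing R] (hE : IsInjectiveHullOfResidueField R E ι) (e : E) :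
    ∃ n : ℕ, e ∈ En R E n := by
  by_contra hcon
  push_neg at hcon
  set S : Submodule R E := Submodule.span R {e} with hS
  haveI : Module.Finite R ↥S :=
    Module.Finite.iff_fg.mpr (Submodule.fg_span_singleton e)
  have hK : (⨅ i : ℕ, (maximalIdeal R) ^ i • ⊤ : Submodule R ↥S) = ⊥ :=
    (maximalIdeal R).iInf_pow_smul_eq_bot_of_isLocalRing (M := ↥S)
      (Ideal.IsMaximal.ne_top (maximalIdeal.isMaximal R))
  set T : ℕ → Submodule R E :=
    fun n => Submodule.map S.subtype ((maximalIdeal R) ^ n • ⊤) with hT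
  have hTne : ∀ n, T n ≠ ⊥ := by
    intro n
    have := hcon n
    rw [mem_En] at this
    push_neg at this
    obtain ⟨x, hx, hxe⟩ := this
    rw [Submodule.ne_bot_iff]
    refine ⟨x • e, ⟨x • ⟨e, Submodule.mem_span_singleton_self e⟩,
      Submodule.smul_mem_smul hx Submodule.mem_top, rfl⟩, hxe⟩
  have hmem : ∀ n, ι (Submodule.Quotient.mk 1) ∈ T n := by
    intro n
    obtain ⟨y, hy, hy0⟩ := Submodule.exists_mem_ne_zero_of_ne_bot (hE.2.2 _ (hTne n))
    obtain ⟨hy1, hy2⟩ := Submodule.mem_inf.mp hy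
    obtain ⟨c, rfl⟩ := hy2
    obtain ⟨c₀, rfl⟩ := Submodule.Quotient.mk_surjective _ c
    have hc₀ : c₀ ∉ maximalIdeal R := by
      intro hmem
      apply hy0
      rw [(Submodule.Quotient.mk_eq_zero _).mpr hmem, map_zero]
    have hu : IsUnit c₀ := by
      by_contra hu
      exact hc₀ hu
    obtain ⟨u, rfl⟩ := hu
    have key : ι (Submodule.Quotient.mk 1) = ((u⁻¹ : Rˣ) : R) • ι (Submodule.Quotient.mk (u : R)) := by
      rw [← map_smul, ← Submodule.Quotient.mk_smul, smul_eq_mul, Units.inv_mul]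
    rw [key]
    exact Submodule.smul_mem _ _ hy1
  have hzero : ι (Submodule.Quotient.mk 1) = 0 := by
    obtain ⟨x0, hx0, heq0⟩ := hmem 0
    have hx0' : ∀ n, x0 ∈ ((maximalIdeal R) ^ n • ⊤ : Submodule R ↥S) := by
      intro n
      obtain ⟨xn, hxn, heqn⟩ := hmem n
      have : xn = x0 := Subtype.ext (by
        show S.subtype xn = S.subtype x0
        rw [heqn, heq0])
      rwa [this] at hxn
    have : x0 ∈ (⨅ i : ℕ, (maximalIdeal R) ^ i • ⊤ : Submodule R ↥S) :=
      Submodule.mem_iInf _ |>.mpr hx0'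
    rw [hK, Submodule.mem_bot] at this
    rw [← heq0, this, map_zero]
  have := hE.2.1 (by rw [hzero, map_zero] : ι (Submodule.Quotient.mk 1) = ι 0)
  rw [Submodule.Quotient.mk_eq_zero] at this
  exact (Ideal.IsMaximal.ne_top (maximalIdeal.isMaximal R)) (Ideal.eq_top_iff_one _ |>.mpr this)

/-- If `s` kills everything killed by `m^n`, then `s ∈ m^n`. -/
theorem faithful (hE : IsInjectiveHullOfResidueField R E ι) (n : ℕ) (s : R)
    (hs : ∀ e ∈ En R E n, s • e = 0) : s ∈ (maximalIdeal R) ^ n := by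
  by_contra hsn
  have hp : (Submodule.Quotient.mk s : R ⧸ ((maximalIdeal R) ^ n)) ≠ 0 := by
    rw [Ne, Submodule.Quotient.mk_eq_zero]; exact hsn
  obtain ⟨φ, hφ⟩ := cogen hE hp
  have h1 : φ (Submodule.Quotient.mk 1) ∈ En R E n := by
    intro x hx
    rw [← map_smul, ← Submodule.Quotient.mk_smul, smul_eq_mul, mul_one]
    rw [(Submodule.Quotient.mk_eq_zero _).mpr hx, map_zero]
  have := hs _ h1
  rw [← map_smul, ← Submodule.Quotient.mk_smul, smul_eq_mul, mul_one] at this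
  exact hφ this

theorem socle_le (hE : IsInjectiveHullOfResidueField R E ι) :
    En R E 1 ≤ LinearMap.range ι := by
  intro e he
  by_cases h0 : e = 0
  · rw [h0]; exact Submodule.zero_mem _
  have hne : Submodule.span R {e} ⊓ LinearMap.range ι ≠ ⊥ := by
    apply hE.2.2
    rw [Ne, Submodule.span_singleton_eq_bot]
    exact h0
  obtain ⟨y, hy, hy0⟩ := Submodule.exists_mem_ne_zero_of_ne_bot hne
  obtain ⟨hy1, hy2⟩ := Submodule.mem_inf.mp hy
  obtain ⟨r, rfl⟩ := Submodule.mem_span_singleton.mp hy1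
  have hr : IsUnit r := by
    by_contra hr
    have : r ∈ maximalIdeal R := hr
    exact hy0 (he r (by rwa [pow_one]))
  obtain ⟨u, rfl⟩ := hr
  have : e = (u⁻¹ : Rˣ) • ((u : R) • e) := by
    rw [← smul_assoc]
    simp [Units.smul_def]
  rw [this]
  exact Submodule.smul_mem _ _ hy2

/-- The projection from the socle back to the residue field. -/
noncomputable def pi (hE : IsInjectiveHullOfResidueField R E ι) :
    ↥(En R E 1) →ₗ[R] (R ⧸ maximalIdeal R) :=
  ((LinearEquiv.ofInjective ι hE.2.1).symm : _ →ₗ[R] _) ∘ₗ Submodule.inclusion (socle_le hE)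

theorem pi_spec (hE : IsInjectiveHullOfResidueField R E ι) (a : ↥(En R E 1)) :
    ι (pi hE a) = (a : E) := by
  show ι ((LinearEquiv.ofInjective ι hE.2.1).symm ⟨(a : E), socle_le hE a.2⟩) = (a : E)
  rw [← LinearEquiv.ofInjective_apply ι (h := hE.2.1), LinearEquiv.apply_symm_apply]

theorem pi_inj (hE : IsInjectiveHullOfResidueField R E ι) : Function.Injective (pi hE) := by
  intro a b hab
  apply Subtype.ext
  rw [← pi_spec hE a, ← pi_spec hE b, hab]

set_option maxHeartbeats 8000000 in
/-- The key inductive step: a map killing `En n` agrees with multiplication by some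
`s ∈ m^n` on `En (n+1)`. -/
theorem step [IsNoetherianRing R] (hE : IsInjectiveHullOfResidueField R E ι) (n : ℕ)
    (θ : E →ₗ[R] E) (hθ : ∀ e ∈ En R E n, θ e = 0) :
    ∃ s ∈ (maximalIdeal R) ^ n, ∀ e ∈ En R E (n + 1), θ e = s • e := by
  classical
  letI : Field (R ⧸ maximalIdeal R) := Ideal.Quotient.field _
  have hsur : Function.Surjective (algebraMap R (R ⧸ maximalIdeal R)) := by
    rw [Ideal.Quotient.algebraMap_eq]
    exact Ideal.Quotient.mk_surjective
  -- `θ` maps `En (n+1)` into the socle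
  have hθ1 : ∀ e : ↥(En R E (n + 1)), θ (e : E) ∈ En R E 1 := by
    intro e
    rw [mem_En]
    intro x hx
    rw [pow_one] at hx
    rw [← map_smul]
    apply hθ
    rw [mem_En]
    intro y hy
    rw [smul_smul]
    exact e.2 _ (by rw [pow_succ]; exact Ideal.mul_mem_mul hy hx)
  -- multiplication by `s ∈ m^n` maps `En (n+1)` into the socle
  have hmu : ∀ s : R, s ∈ (maximalIdeal R) ^ n → ∀ e : ↥(En R E (n + 1)),
      s • (e : E) ∈ En R E 1 := by
    intro s hs e
    rw [mem_En]
    intro x hx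
    rw [pow_one] at hx
    rw [smul_smul, mul_comm]
    exact e.2 _ (by rw [pow_succ]; exact Ideal.mul_mem_mul hs hx)
  -- the pairing `m^n × En (n+1) → k`
  set A : ↥((maximalIdeal R) ^ n) →ₗ[R]
      (↥(En R E (n + 1)) →ₗ[R] (R ⧸ maximalIdeal R)) :=
    LinearMap.mk₂ R (fun s e => pi hE ⟨(s : R) • (e : E), hmu _ s.2 e⟩)
      (by
        intro s t e
        rw [← map_add]
        exact congrArg (pi hE) (Subtype.ext (by simp [add_smul])))
      (by
        intro c s e
        rw [← map_smul]
        exact congrArg (pi hE) (Subtype.ext (by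
          simp only [SetLike.val_smul, smul_eq_mul]
          rw [mul_smul])))
      (by
        intro s e e'
        rw [← map_add]
        exact congrArg (pi hE) (Subtype.ext (by simp [smul_add])))
      (by
        intro c s e
        rw [← map_smul]
        exact congrArg (pi hE) (Subtype.ext (by
          simp only [SetLike.val_smul]
          rw [smul_comm]))) with hA
  have hA_apply : ∀ (s : ↥((maximalIdeal R) ^ n)) (e : ↥(En R E (n + 1))),
      A s e = pi hE ⟨(s : R) • (e : E), hmu _ s.2 e⟩ := fun s e => rfl
  -- the functional attached to `θ`
  set θ' : ↥(En R E (n + 1)) →ₗ[R] (R ⧸ maximalIdeal R) :=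
    (pi hE) ∘ₗ LinearMap.codRestrict (En R E 1) (θ ∘ₗ (En R E (n + 1)).subtype)
      (fun e => hθ1 e) with hθ'
  have hθ'_apply : ∀ e : ↥(En R E (n + 1)), θ' e = pi hE ⟨θ (e : E), hθ1 e⟩ :=
    fun e => rfl
  -- quotient spaces
  set W₀ : Submodule R ↥(En R E (n + 1)) :=
    Submodule.comap (En R E (n + 1)).subtype (En R E n) with hW₀
  set V₀ : Submodule R ↥((maximalIdeal R) ^ n) :=
    Submodule.comap ((maximalIdeal R) ^ n).subtype ((maximalIdeal R) ^ (n + 1)) with hV₀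
  have htorW : Module.IsTorsionBySet R (↥(En R E (n + 1)) ⧸ W₀)
      ((maximalIdeal R : Ideal R) : Set R) := by
    intro x a
    obtain ⟨e, rfl⟩ := Submodule.Quotient.mk_surjective _ x
    rw [← Submodule.Quotient.mk_smul, Submodule.Quotient.mk_eq_zero]
    show ((a : R) • e : ↥(En R E (n + 1))) ∈ W₀
    rw [hW₀, Submodule.mem_comap]
    show (a : R) • (e : E) ∈ En R E n
    rw [mem_En]
    intro y hy
    rw [smul_smul]
    exact e.2 _ (by rw [pow_succ]; exact Ideal.mul_mem_mul hy a.2)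
  have htorV : Module.IsTorsionBySet R (↥((maximalIdeal R) ^ n) ⧸ V₀)
      ((maximalIdeal R : Ideal R) : Set R) := by
    intro x a
    obtain ⟨s, rfl⟩ := Submodule.Quotient.mk_surjective _ x
    rw [← Submodule.Quotient.mk_smul, Submodule.Quotient.mk_eq_zero]
    show ((a : R) • s : ↥((maximalIdeal R) ^ n)) ∈ V₀
    rw [hV₀, Submodule.mem_comap]
    show (a : R) • (s : R) ∈ (maximalIdeal R) ^ (n + 1)
    rw [smul_eq_mul, pow_succ']
    exact Ideal.mul_mem_mul a.2 s.2
  letI instWk : Module (R ⧸ maximalIdeal R) (↥(En R E (n + 1)) ⧸ W₀) := htorW.module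
  letI instWt : IsScalarTower R (R ⧸ maximalIdeal R) (↥(En R E (n + 1)) ⧸ W₀) :=
    htorW.isScalarTower
  letI instVk : Module (R ⧸ maximalIdeal R) (↥((maximalIdeal R) ^ n) ⧸ V₀) := htorV.module
  letI instVt : IsScalarTower R (R ⧸ maximalIdeal R) (↥((maximalIdeal R) ^ n) ⧸ V₀) :=
    htorV.isScalarTower
  -- the induced map on `V := m^n / m^(n+1)`
  have hAker : V₀ ≤ LinearMap.ker A := by
    intro s hs
    have hs' : (s : R) ∈ (maximalIdeal R) ^ (n + 1) := hs
    rw [LinearMap.mem_ker]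
    apply LinearMap.ext
    intro e
    rw [LinearMap.zero_apply, hA_apply]
    have h0 : (s : R) • (e : E) = 0 := e.2 _ hs'
    rw [show (⟨(s : R) • (e : E), hmu _ s.2 e⟩ : ↥(En R E 1)) = 0 from Subtype.ext h0,
      map_zero]
  set Abar := LinearMap.extendScalarsOfSurjective hsur (Submodule.liftQ V₀ A hAker) with hAbar
  have hAbar_apply : ∀ s : ↥((maximalIdeal R) ^ n),
      Abar (Submodule.Quotient.mk s) = A s := fun s => rfl
  -- the subspace of functionals killing `En n`
  set D₀ : Submodule (R ⧸ maximalIdeal R)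
      (↥(En R E (n + 1)) →ₗ[R] (R ⧸ maximalIdeal R)) :=
    { carrier := {F | ∀ e : ↥(En R E (n + 1)), (e : E) ∈ En R E n → F e = 0}
      add_mem' := fun hF hG e he => by
        rw [LinearMap.add_apply, hF e he, hG e he, add_zero]
      zero_mem' := fun e he => rfl
      smul_mem' := fun c F hF e he => by
        rw [LinearMap.smul_apply, hF e he, smul_zero] } with hD₀
  have hθ'D₀ : θ' ∈ D₀ := by
    intro e he
    rw [hθ'_apply]
    rw [show (⟨θ (e : E), hθ1 e⟩ : ↥(En R E 1)) = 0 from Subtype.ext (hθ e he), map_zero]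
  have hrange_le : LinearMap.range Abar ≤ D₀ := by
    rintro F ⟨v, rfl⟩
    obtain ⟨s, rfl⟩ := Submodule.Quotient.mk_surjective _ v
    intro e he
    rw [hAbar_apply, hA_apply]
    have h0 : (s : R) • (e : E) = 0 := he _ s.2
    rw [show (⟨(s : R) • (e : E), hmu _ s.2 e⟩ : ↥(En R E 1)) = 0 from Subtype.ext h0,
      map_zero]
  -- injection of `D₀` into the dual of `W`
  letI instDW : IsScalarTower R (R ⧸ maximalIdeal R)
      (Module.Dual (R ⧸ maximalIdeal R) (↥(En R E (n + 1)) ⧸ W₀)) :=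
    ⟨fun r c f => LinearMap.ext fun w => smul_assoc r c (f w)⟩
  set J1 : ↥D₀ →ₗ[(R ⧸ maximalIdeal R)]
      Module.Dual (R ⧸ maximalIdeal R) (↥(En R E (n + 1)) ⧸ W₀) :=
    { toFun := fun F => LinearMap.extendScalarsOfSurjective hsur
        (Submodule.liftQ W₀ F.1 (fun e he => by
          rw [LinearMap.mem_ker]; exact F.2 e he))
      map_add' := by
        intro F G
        apply LinearMap.ext
        intro w
        obtain ⟨e, rfl⟩ := Submodule.Quotient.mk_surjective _ w
        simp [Submodule.liftQ_apply]
      map_smul' := by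
        intro c F
        apply LinearMap.ext
        intro w
        obtain ⟨e, rfl⟩ := Submodule.Quotient.mk_surjective _ w
        simp [Submodule.liftQ_apply] } with hJ1
  have hJ1inj : Function.Injective J1 := by
    intro F G h
    apply Subtype.ext
    apply LinearMap.ext
    intro e
    have := congrArg (fun Φ => Φ (Submodule.Quotient.mk e)) h
    simpa [hJ1, Submodule.liftQ_apply] using this
  -- injection of `W` into the dual of the range of `Abar`
  letI instDA : IsScalarTower R (R ⧸ maximalIdeal R)
      (Module.Dual (R ⧸ maximalIdeal R) ↥(LinearMap.range Abar)) :=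
    ⟨fun r c f => LinearMap.ext fun w => smul_assoc r c (f w)⟩
  set G2 : ↥(En R E (n + 1)) →ₗ[R]
      Module.Dual (R ⧸ maximalIdeal R) ↥(LinearMap.range Abar) :=
    { toFun := fun e =>
        { toFun := fun F => F.1 e
          map_add' := fun F G => rfl
          map_smul' := fun c F => rfl }
      map_add' := by
        intro e e'
        apply LinearMap.ext
        intro F
        simp
      map_smul' := by
        intro r e
        apply LinearMap.ext
        intro F
        simp } with hG2
  have hG2ker : W₀ ≤ LinearMap.ker G2 := by
    intro e he
    rw [LinearMap.mem_ker]
    apply LinearMap.ext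
    rintro ⟨F, v, rfl⟩
    obtain ⟨s, rfl⟩ := Submodule.Quotient.mk_surjective _ v
    show (Abar (Submodule.Quotient.mk s)) e = 0
    rw [hAbar_apply, hA_apply]
    have he' : (e : E) ∈ En R E n := he
    have h0 : (s : R) • (e : E) = 0 := he' _ s.2
    rw [show (⟨(s : R) • (e : E), hmu _ s.2 e⟩ : ↥(En R E 1)) = 0 from Subtype.ext h0,
      map_zero]
  set J2 := LinearMap.extendScalarsOfSurjective hsur (Submodule.liftQ W₀ G2 hG2ker) with hJ2
  have hJ2inj : Function.Injective J2 := by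
    rw [← LinearMap.ker_eq_bot, eq_bot_iff]
    intro w hw
    rw [LinearMap.mem_ker] at hw
    obtain ⟨e, rfl⟩ := Submodule.Quotient.mk_surjective _ w
    rw [Submodule.mem_bot, Submodule.Quotient.mk_eq_zero]
    show (e : E) ∈ En R E n
    rw [mem_En]
    by_contra hcon
    push_neg at hcon
    obtain ⟨x, hx, hxe⟩ := hcon
    have hF : Abar (Submodule.Quotient.mk ⟨x, hx⟩) ∈ LinearMap.range Abar :=
      ⟨Submodule.Quotient.mk ⟨x, hx⟩, rfl⟩
    have := congrArg (fun Φ => Φ ⟨_, hF⟩) hw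
    simp only [hJ2, LinearMap.extendScalarsOfSurjective_apply, Submodule.liftQ_apply,
      LinearMap.zero_apply] at this
    have h2 : (Abar (Submodule.Quotient.mk ⟨x, hx⟩)) e = 0 := this
    rw [hAbar_apply, hA_apply] at h2
    have h3 : (⟨x • (e : E), hmu _ hx e⟩ : ↥(En R E 1)) = 0 := by
      apply pi_inj hE
      rw [map_zero]
      exact h2
    exact hxe (by simpa using congrArg Subtype.val h3)
  -- dimension count
  haveI hVfinR : Module.Finite R ↥((maximalIdeal R) ^ n) :=
    Module.Finite.iff_fg.mpr (IsNoetherian.noetherian _)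
  haveI hVfinR' : Module.Finite R (↥((maximalIdeal R) ^ n) ⧸ V₀) :=
    Module.Finite.of_surjective V₀.mkQ (Submodule.Quotient.mk_surjective _)
  haveI hVfin : Module.Finite (R ⧸ maximalIdeal R) (↥((maximalIdeal R) ^ n) ⧸ V₀) :=
    Module.Finite.of_restrictScalars_finite R _ _
  haveI hAranfin : FiniteDimensional (R ⧸ maximalIdeal R) ↥(LinearMap.range Abar) :=
    Module.Finite.range Abar
  haveI : Module.Free (R ⧸ maximalIdeal R) ↥(LinearMap.range Abar) :=
    by convert Module.Free.of_divisionRing (R ⧸ maximalIdeal R) ↥(LinearMap.range Abar)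
  haveI : Module.Finite (R ⧸ maximalIdeal R) (Module.Dual (R ⧸ maximalIdeal R) ↥(LinearMap.range Abar)) :=
    Module.dual_finite (R := R ⧸ maximalIdeal R) (M := ↥(LinearMap.range Abar))
  haveI hWfin : FiniteDimensional (R ⧸ maximalIdeal R) (↥(En R E (n + 1)) ⧸ W₀) :=
    FiniteDimensional.of_injective J2 hJ2inj
  haveI hD₀fin : FiniteDimensional (R ⧸ maximalIdeal R) ↥D₀ :=
    FiniteDimensional.of_injective J1 hJ1inj
  have hrank1 : Module.finrank (R ⧸ maximalIdeal R) ↥D₀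
      ≤ Module.finrank (R ⧸ maximalIdeal R) (↥(En R E (n + 1)) ⧸ W₀) := by
    have := LinearMap.finrank_le_finrank_of_injective hJ1inj
    rwa [Subspace.dual_finrank_eq] at this
  have hrank2 : Module.finrank (R ⧸ maximalIdeal R) (↥(En R E (n + 1)) ⧸ W₀)
      ≤ Module.finrank (R ⧸ maximalIdeal R) ↥(LinearMap.range Abar) := by
    have := LinearMap.finrank_le_finrank_of_injective hJ2inj
    exact this.trans_eq (Module.Free.chooseBasis (R ⧸ maximalIdeal R) ↥(LinearMap.range Abar)).toDualEquiv.finrank_eq.symm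
  have heq : LinearMap.range Abar = D₀ :=
    Submodule.eq_of_le_of_finrank_le hrange_le (le_trans hrank1 hrank2)
  have hθ'mem : θ' ∈ LinearMap.range Abar := heq ▸ hθ'D₀
  obtain ⟨v, hv⟩ := hθ'mem
  obtain ⟨s, rfl⟩ := Submodule.Quotient.mk_surjective _ v
  refine ⟨(s : R), s.2, ?_⟩
  intro e he
  have h5 := LinearMap.congr_fun hv (⟨e, he⟩ : ↥(En R E (n + 1)))
  rw [hAbar_apply, hA_apply, hθ'_apply] at h5
  exact (congrArg Subtype.val (pi_inj hE h5)).symm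

/-- Every endomorphism of `E` is multiplication by a scalar, when `R` is complete. -/
theorem smul_surj [IsNoetherianRing R] (hE : IsInjectiveHullOfResidueField R E ι)
    (hc : IsAdicComplete (maximalIdeal R) R) (φ : E →ₗ[R] E) :
    ∃ r : R, ∀ e : E, φ e = r • e := by
  have hex : ∀ n : ℕ, ∃ x : R, ∀ e ∈ En R E n, φ e = x • e := by
    intro n
    induction n with
    | zero =>
      refine ⟨0, fun e he => ?_⟩
      rw [En_zero] at he
      rw [Submodule.mem_bot] at he
      simp [he]
    | succ n ih =>
      obtain ⟨x, hx⟩ := ih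
      obtain ⟨s, _, hs⟩ := step hE n (φ - LinearMap.lsmul R E x)
        (fun e he => by
          simp only [LinearMap.sub_apply, LinearMap.lsmul_apply, hx e he, sub_self])
      refine ⟨x + s, fun e he => ?_⟩
      have := hs e he
      simp only [LinearMap.sub_apply, LinearMap.lsmul_apply] at this
      rw [add_smul, ← this]
      abel
  choose r hr using hex
  have hcau : ∀ {a b : ℕ}, a ≤ b →
      r a ≡ r b [SMOD ((maximalIdeal R) ^ a • ⊤ : Submodule R R)] := by
    intro a b hab
    rw [SModEq.sub_mem, Ideal.smul_eq_mul, Ideal.mul_top]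
    apply faithful hE
    intro e he
    rw [sub_smul, ← hr a e he, ← hr b e (En_mono hab he), sub_self]
  obtain ⟨L, hL⟩ := hc.toIsPrecomplete.prec hcau
  refine ⟨L, fun e => ?_⟩
  obtain ⟨n, hn⟩ := torsion hE e
  have hLn : L - r n ∈ (maximalIdeal R) ^ n := by
    have := (hL n).symm
    rw [SModEq.sub_mem, Ideal.smul_eq_mul, Ideal.mul_top] at this
    exact this
  have : (L - r n) • e = 0 := hn _ hLn
  rw [sub_smul, sub_eq_zero] at this
  rw [hr n e hn, this]

theorem smul_inj (hE : IsInjectiveHullOfResidueField R E ι) {a b : R}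
    (h : ∀ e : E, a • e = b • e) : a = b := by
  by_contra hab
  have : a - b ≠ 0 := sub_ne_zero.mpr hab
  obtain ⟨φ, hφ⟩ := cogen hE this
  apply hφ
  have : φ (a - b) = (a - b) • φ 1 := by
    rw [← map_smul, smul_eq_mul, mul_one]
  rw [this, sub_smul, h (φ 1), sub_self]

end InjHullAux

open InjHullAux in
/-- Let `(R, 𝔪)` be a Noetherian local ring with injective hull `E` of the residue field,
`M` an `R`-module and `f : R → M` an `R`-linear map.  If the induced map
`E ≅ R ⊗[R] E → M ⊗[R] E` is injective, then `f` is pure; if moreover `R` is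
`𝔪`-adically complete, then `f` splits. -/
theorem pure_of_injective_after_tensor_injectiveHull
    (R : Type u) [CommRing R] [IsLocalRing R] [IsNoetherianRing R]
    (E : Type u) [AddCommGroup E] [Module R E]
    (ι : (R ⧸ IsLocalRing.maximalIdeal R) →ₗ[R] E)
    (hE : IsInjectiveHullOfResidueField R E ι)
    (M : Type u) [AddCommGroup M] [Module R M] (f : R →ₗ[R] M)
    (hinj : Function.Injective (LinearMap.rTensor E f)) :
    IsPureMap f ∧
      (IsAdicComplete (IsLocalRing.maximalIdeal R) R →
        ∃ g : M →ₗ[R] R, g ∘ₗ f = LinearMap.id) := by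
  classical
  -- the retraction at the level of `E`:
  obtain ⟨Ψ, hΨ⟩ := hE.1.out (LinearMap.rTensor E f) hinj (TensorProduct.lid R E).toLinearMap
  have hΨ' : ∀ (r : R) (e : E), Ψ (f r ⊗ₜ[R] e) = r • e := by
    intro r e
    have := hΨ (r ⊗ₜ[R] e)
    rwa [LinearMap.rTensor_tmul, LinearEquiv.coe_toLinearMap, TensorProduct.lid_tmul] at this
  constructor
  · -- purity
    intro P _ _
    rw [← LinearMap.ker_eq_bot, eq_bot_iff]
    intro z hz
    rw [LinearMap.mem_ker] at hz
    rw [Submodule.mem_bot]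
    by_contra h0
    set p : P := TensorProduct.rid R P z with hp
    have hpne : p ≠ 0 := by
      intro h
      apply h0
      have hz' : (TensorProduct.rid R P).symm p = z := by
        rw [hp, LinearEquiv.symm_apply_apply]
      rw [h, map_zero] at hz'
      exact hz'.symm
    obtain ⟨φ, hφ⟩ := cogen hE hpne
    set β : P ⊗[R] M →ₗ[R] E :=
      Ψ ∘ₗ (LinearMap.lTensor M φ) ∘ₗ (TensorProduct.comm R P M).toLinearMap with hβ
    have key : β ∘ₗ LinearMap.lTensor P f
        = φ ∘ₗ (TensorProduct.rid R P).toLinearMap := by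
      apply TensorProduct.ext'
      intro q r
      simp only [hβ, LinearMap.comp_apply, LinearMap.lTensor_tmul,
        LinearEquiv.coe_toLinearMap, TensorProduct.comm_tmul, TensorProduct.rid_tmul,
        hΨ', map_smul]
    have h1 : β (LinearMap.lTensor P f z) = φ p := by
      rw [← LinearMap.comp_apply, key]
      simp [hp]
    rw [hz, map_zero] at h1
    exact hφ h1.symm
  · -- splitting
    intro hc
    have hbij : Function.Bijective (LinearMap.lsmul R E) := by
      constructor
      · intro a b hab
        exact smul_inj hE (fun e => by
          have := congrArg (fun g => g e) hab
          simpa using this)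
      · intro φ
        obtain ⟨r, hr⟩ := smul_surj hE hc φ
        exact ⟨r, by ext e; simp [hr e]⟩
    set ev := LinearEquiv.ofBijective (LinearMap.lsmul R E) hbij with hev
    refine ⟨ev.symm.toLinearMap ∘ₗ TensorProduct.curry Ψ, ?_⟩
    apply LinearMap.ext
    intro r
    simp only [LinearMap.comp_apply, LinearMap.id_apply, LinearEquiv.coe_toLinearMap]
    have h1 : TensorProduct.curry Ψ (f r) = LinearMap.lsmul R E r := by
      ext e
      simp [TensorProduct.curry_apply, hΨ', LinearMap.lsmul_apply]
    rw [h1]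
    exact ev.symm_apply_eq.mpr rfl
end

section
/- Let R be a Noetherian ring. Then the natural ring map R → ∏_m (R_m)^, where the product runs over all maximal ideals m of R and (R_m)^ denotes the m-adic completion of the localization R_m, is faithfully flat. In particular this map is pure. -/
universe u

instance (R : Type u) [CommRing R] (m : {I : Ideal R // I.IsMaximal}) : m.1.IsPrime :=
  m.2.isPrime

/-- The product `∏_𝔪 (R_𝔪)^∧`, over all maximal ideals `𝔪` of `R`, of the `𝔪`-adic
completions of the localizations `R_𝔪`. -/
abbrev ProdOfCompletedLocalizations (R : Type u) [CommRing R] : Type u :=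
  Π m : {I : Ideal R // I.IsMaximal},
    AdicCompletion (IsLocalRing.maximalIdeal (Localization.AtPrime m.1))
      (Localization.AtPrime m.1)

/-- The natural ring map `R → ∏_𝔪 (R_𝔪)^∧`. -/
noncomputable def toProdOfCompletedLocalizations (R : Type u) [CommRing R] :
    R →+* ProdOfCompletedLocalizations R :=
  Pi.ringHom fun m =>
    ((algebraMap (Localization.AtPrime m.1)
        (AdicCompletion (IsLocalRing.maximalIdeal (Localization.AtPrime m.1))
          (Localization.AtPrime m.1))).comp
      (algebraMap R (Localization.AtPrime m.1)))

noncomputable instance (R : Type u) [CommRing R] :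
    Algebra R (ProdOfCompletedLocalizations R) :=
  (toProdOfCompletedLocalizations R).toAlgebra

open TensorProduct LinearMap

section PiFlat

variable {R : Type u} [CommRing R] {ι : Type u} (M : ι → Type u)
  [∀ i, AddCommGroup (M i)] [∀ i, Module R (M i)]

lemma MyAux.piRightHom_naturality {N N' : Type u} [AddCommGroup N] [Module R N]
    [AddCommGroup N'] [Module R N'] (f : N →ₗ[R] N') (x : N ⊗[R] (Π i, M i)) (i : ι) :
    TensorProduct.piRightHom R R N' M (rTensor (Π i, M i) f x) i
      = rTensor (M i) f (TensorProduct.piRightHom R R N M x i) := by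
  have h : ((LinearMap.proj i).comp ((TensorProduct.piRightHom R R N' M).comp
        (rTensor (Π i, M i) f)))
      = (rTensor (M i) f).comp ((LinearMap.proj i).comp (TensorProduct.piRightHom R R N M)) := by
    apply TensorProduct.ext'
    intro n m
    rfl
  exact DFunLike.congr_fun h x

/-- Explicit inverse of `piRightHom` for a finite free module. -/
noncomputable def MyAux.pinv (n : ℕ) :
    (Π i, (Fin n → R) ⊗[R] M i) →ₗ[R] (Fin n → R) ⊗[R] (Π i, M i) :=
  ∑ k : Fin n, (TensorProduct.mk R (Fin n → R) (Π i, M i) (Pi.single k 1)).comp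
      (LinearMap.pi fun i =>
        ((TensorProduct.lid R (M i)).toLinearMap.comp
          (rTensor (M i) (LinearMap.proj k))).comp (LinearMap.proj i))

lemma MyAux.pinv_piRightHom (n : ℕ) (x : (Fin n → R) ⊗[R] (Π i, M i)) :
    MyAux.pinv M n (TensorProduct.piRightHom R R (Fin n → R) M x) = x := by
  have h : (MyAux.pinv M n).comp ((TensorProduct.piRightHom R R (Fin n → R) M : _ →ₗ[R] _))
      = LinearMap.id := by
    apply TensorProduct.ext'
    intro v m
    simp only [MyAux.pinv, LinearMap.sum_apply, LinearMap.comp_apply, LinearMap.id_apply,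
      TensorProduct.piRightHom_tmul, TensorProduct.mk_apply]
    have hterm : ∀ k : Fin n,
        (LinearMap.pi fun i =>
            ((TensorProduct.lid R (M i)).toLinearMap.comp
              (rTensor (M i) (LinearMap.proj k))).comp (LinearMap.proj i))
          (fun i => v ⊗ₜ[R] m i) = v k • m := by
      intro k
      funext i
      simp [TensorProduct.lid_tmul]
    rw [show (∑ k : Fin n, (Pi.single k (1:R) : Fin n → R) ⊗ₜ[R]
          ((LinearMap.pi fun i =>
            ((TensorProduct.lid R (M i)).toLinearMap.comp
              (rTensor (M i) (LinearMap.proj k))).comp (LinearMap.proj i))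
          (fun i => v ⊗ₜ[R] m i)))
        = ∑ k : Fin n, (Pi.single k (v k) : Fin n → R) ⊗ₜ[R] m from ?_]
    · rw [← TensorProduct.sum_tmul, Finset.univ_sum_single]
    · refine Finset.sum_congr rfl fun k _ => ?_
      rw [hterm k, ← TensorProduct.smul_tmul]
      congr 1
      funext j
      by_cases hj : j = k
      · subst hj; simp
      · simp [Pi.single_apply, hj]
  exact DFunLike.congr_fun h x

lemma MyAux.piRightHom_pinv (n : ℕ) (w : Π i, (Fin n → R) ⊗[R] M i) :
    TensorProduct.piRightHom R R (Fin n → R) M (MyAux.pinv M n w) = w := by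
  funext i
  have hmap : TensorProduct.piRightHom R R (Fin n → R) M (MyAux.pinv M n w) i
      = ∑ k : Fin n, (Pi.single k (1:R) : Fin n → R) ⊗ₜ[R]
          ((TensorProduct.lid R (M i)) (rTensor (M i) (LinearMap.proj k) (w i))) := by
    simp only [MyAux.pinv, LinearMap.sum_apply, map_sum]
    rw [Finset.sum_apply]
    rfl
  rw [hmap]
  -- now a statement purely about `w i` in `(Fin n → R) ⊗ M i`
  have h : (∑ k : Fin n, (TensorProduct.mk R (Fin n → R) (M i) (Pi.single k 1)).comp
        ((TensorProduct.lid R (M i)).toLinearMap.comp (rTensor (M i) (LinearMap.proj k))))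
      = (LinearMap.id : (Fin n → R) ⊗[R] M i →ₗ[R] _) := by
    apply TensorProduct.ext'
    intro v m
    simp only [LinearMap.sum_apply, LinearMap.comp_apply, LinearMap.id_apply,
      TensorProduct.mk_apply, rTensor_tmul, LinearEquiv.coe_coe, TensorProduct.lid_tmul,
      LinearMap.proj_apply]
    rw [show (∑ k : Fin n, (Pi.single k (1:R) : Fin n → R) ⊗ₜ[R] (v k • m))
        = ∑ k : Fin n, (Pi.single k (v k) : Fin n → R) ⊗ₜ[R] m from ?_]
    · rw [← TensorProduct.sum_tmul, Finset.univ_sum_single]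
    · refine Finset.sum_congr rfl fun k _ => ?_
      rw [← TensorProduct.smul_tmul]
      congr 1
      funext j
      by_cases hj : j = k
      · subst hj; simp
      · simp [Pi.single_apply, hj]
  calc ∑ k : Fin n, (Pi.single k (1:R) : Fin n → R) ⊗ₜ[R]
          ((TensorProduct.lid R (M i)) (rTensor (M i) (LinearMap.proj k) (w i)))
      = (∑ k : Fin n, (TensorProduct.mk R (Fin n → R) (M i) (Pi.single k 1)).comp
          ((TensorProduct.lid R (M i)).toLinearMap.comp (rTensor (M i) (LinearMap.proj k)))) (w i) := by
        simp [LinearMap.sum_apply]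
    _ = w i := by rw [h]; rfl

lemma MyAux.piRightHom_bijective_fin (n : ℕ) :
    Function.Bijective (TensorProduct.piRightHom R R (Fin n → R) M) :=
  ⟨fun a b hab => by
      rw [← MyAux.pinv_piRightHom M n a, hab, MyAux.pinv_piRightHom],
    fun w => ⟨MyAux.pinv M n w, MyAux.piRightHom_pinv M n w⟩⟩

lemma MyAux.piRightHom_injective_of_finite [IsNoetherianRing R]
    (N : Type u) [AddCommGroup N] [Module R N] [Module.Finite R N] :
    Function.Injective (TensorProduct.piRightHom R R N M) := by
  obtain ⟨n, p, hp⟩ := Module.Finite.exists_fin' R N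
  haveI : Module.Finite R (LinearMap.ker p) :=
    Module.Finite.iff_fg.mpr (IsNoetherian.noetherian _)
  obtain ⟨k, q, hq⟩ := Module.Finite.exists_fin' R (LinearMap.ker p)
  set g : (Fin k → R) →ₗ[R] (Fin n → R) := (LinearMap.ker p).subtype.comp q with hg
  have hexact : Function.Exact g p := by
    rw [LinearMap.exact_iff, hg, LinearMap.range_comp, LinearMap.range_eq_top.mpr hq,
      Submodule.map_top, Submodule.range_subtype]
  have hpg : p.comp g = 0 :=
    LinearMap.ext fun a => hexact.apply_apply_eq_zero a
  rw [injective_iff_map_eq_zero]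
  intro x hx
  obtain ⟨y, rfl⟩ := rTensor_surjective (Π i, M i) (g := p) hp x
  have h1 : ∀ i, rTensor (M i) p (TensorProduct.piRightHom R R (Fin n → R) M y i) = 0 := by
    intro i
    rw [← MyAux.piRightHom_naturality, hx]
    rfl
  have h2 : ∀ i, ∃ z, rTensor (M i) g z
      = TensorProduct.piRightHom R R (Fin n → R) M y i := by
    intro i
    exact ((rTensor_exact (M i) hexact hp) _).mp (h1 i)
  choose z hz using h2
  obtain ⟨w, hw⟩ := (MyAux.piRightHom_bijective_fin M k).2 z
  have hy : rTensor (Π i, M i) g w = y := by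
    apply (MyAux.piRightHom_bijective_fin M n).1
    funext i
    rw [MyAux.piRightHom_naturality, hw, hz]
  rw [← hy, ← LinearMap.comp_apply, ← rTensor_comp, hpg, rTensor_zero, LinearMap.zero_apply]

lemma MyAux.flat_pi [IsNoetherianRing R] [∀ i, Module.Flat R (M i)] :
    Module.Flat R (Π i, M i) := by
  rw [Module.Flat.iff_rTensor_injective']
  intro I
  have hcomp : ∀ i, Function.Injective (rTensor (M i) I.subtype) := fun i =>
    (Module.Flat.iff_rTensor_injective' (R := R) (M := M i)).mp inferInstance I
  haveI : Module.Finite R I := Module.Finite.iff_fg.mpr (IsNoetherian.noetherian I)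
  intro x y hxy
  apply MyAux.piRightHom_injective_of_finite M (↥I)
  funext i
  apply hcomp i
  rw [← MyAux.piRightHom_naturality, ← MyAux.piRightHom_naturality, hxy]

end PiFlat

set_option maxHeartbeats 1000000 in
/-- Faithfully flat algebras are pure. -/
lemma MyAux.pure_of_faithfullyFlat {R : Type u} [CommRing R] (S : Type u) [CommRing S]
    [Algebra R S] [Module.FaithfullyFlat R S] (Q : Type u) [AddCommGroup Q] [Module R Q] :
    Function.Injective (lTensor Q (Algebra.linearMap R S)) := by
  have hσ : Function.Injective (rTensor S (lTensor Q (Algebra.linearMap R S))) := by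
    have hcomp : ((lTensor Q (LinearMap.mul' R S)).comp
          (TensorProduct.assoc R Q S S).toLinearMap).comp
            (rTensor S (lTensor Q (Algebra.linearMap R S)))
        = (LinearEquiv.rTensor S (TensorProduct.rid R Q)).toLinearMap := by
      apply TensorProduct.ext_threefold
      intro q r s
      simp only [LinearMap.comp_apply, rTensor_tmul, lTensor_tmul,
        Algebra.linearMap_apply, LinearEquiv.coe_coe, TensorProduct.assoc_tmul,
        LinearMap.mul'_apply, LinearEquiv.rTensor_tmul, TensorProduct.rid_tmul]
      rw [TensorProduct.smul_tmul, Algebra.smul_def]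
    intro a b hab
    apply (LinearEquiv.rTensor S (TensorProduct.rid R Q)).injective
    have := congrArg (((lTensor Q (LinearMap.mul' R S)).comp
      (TensorProduct.assoc R Q S S).toLinearMap)) hab
    rw [← LinearMap.comp_apply, ← LinearMap.comp_apply, hcomp] at this
    exact this
  rw [injective_iff_map_eq_zero]
  intro a ha
  have h2 : (rTensor S (lTensor Q (Algebra.linearMap R S))).comp
      (rTensor S (LinearMap.ker (lTensor Q (Algebra.linearMap R S))).subtype) = 0 := by
    rw [← rTensor_comp]
    have hz : (lTensor Q (Algebra.linearMap R S)).comp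
        (LinearMap.ker (lTensor Q (Algebra.linearMap R S))).subtype = 0 := by
      apply LinearMap.ext
      intro b
      exact (LinearMap.mem_ker.mp b.2 : _)
    rw [hz, rTensor_zero]
  have h3 : rTensor S (LinearMap.ker (lTensor Q (Algebra.linearMap R S))).subtype = 0 := by
    apply LinearMap.ext
    intro b
    apply hσ
    rw [← LinearMap.comp_apply, h2]
    simp
  have hsub : Subsingleton
      ((LinearMap.ker (lTensor Q (Algebra.linearMap R S))) ⊗[R] S) := by
    refine subsingleton_iff_forall_eq 0 |>.mpr fun x => ?_
    have hinj : Function.Injective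
        (rTensor S (LinearMap.ker (lTensor Q (Algebra.linearMap R S))).subtype) :=
      Module.Flat.rTensor_preserves_injective_linearMap _ (Submodule.injective_subtype _)
    apply hinj
    rw [h3]
    simp
  have hK : Subsingleton ↥(LinearMap.ker (lTensor Q (Algebra.linearMap R S))) :=
    Module.FaithfullyFlat.rTensor_reflects_triviality R S _
  have := congrArg Subtype.val
    (Subsingleton.elim (⟨a, LinearMap.mem_ker.mpr ha⟩ :
      ↥(LinearMap.ker (lTensor Q (Algebra.linearMap R S)))) 0)
  simpa using this

set_option maxHeartbeats 2000000 in
set_option synthInstance.maxHeartbeats 400000 in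
/-- For a Noetherian ring `R`, the natural map `R → ∏_𝔪 (R_𝔪)^∧` (product over all maximal
ideals `𝔪`, where `(R_𝔪)^∧` is the `𝔪`-adic completion of the localization) is faithfully
flat; in particular it is pure. -/
theorem faithfullyFlat_toProdOfCompletedLocalizations
    (R : Type u) [CommRing R] [IsNoetherianRing R] :
    Module.FaithfullyFlat R (ProdOfCompletedLocalizations R) ∧
      @IsPureMap R R (ProdOfCompletedLocalizations R) _ _ _ _ Algebra.toModule
        (Algebra.linearMap R (ProdOfCompletedLocalizations R)) := by
  classical
  have hsmC : ∀ (m : {I : Ideal R // I.IsMaximal}) (r : R)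
      (z : AdicCompletion (IsLocalRing.maximalIdeal (Localization.AtPrime m.1))
        (Localization.AtPrime m.1)),
      r • z = algebraMap (Localization.AtPrime m.1) _ (algebraMap R (Localization.AtPrime m.1) r) * z := by
    intro m r z
    rw [← smul_eq_mul, algebraMap_smul, algebraMap_smul]
  letI algC : ∀ m : {I : Ideal R // I.IsMaximal},
      Algebra R (AdicCompletion (IsLocalRing.maximalIdeal (Localization.AtPrime m.1))
        (Localization.AtPrime m.1)) := fun m =>
    ((algebraMap (Localization.AtPrime m.1)
        (AdicCompletion (IsLocalRing.maximalIdeal (Localization.AtPrime m.1))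
          (Localization.AtPrime m.1))).comp
      (algebraMap R (Localization.AtPrime m.1))).toAlgebra
  haveI tower : ∀ m : {I : Ideal R // I.IsMaximal},
      IsScalarTower R (Localization.AtPrime m.1)
        (AdicCompletion (IsLocalRing.maximalIdeal (Localization.AtPrime m.1))
          (Localization.AtPrime m.1)) := by
    intro m
    constructor
    intro r a x
    show ((r • a) • x : AdicCompletion (IsLocalRing.maximalIdeal
        (Localization.AtPrime m.1)) (Localization.AtPrime m.1)) = r • (a • x)
    rw [Algebra.smul_def r a, Algebra.smul_def, Algebra.smul_def a x]
    rw [hsmC]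
    rw [map_mul, mul_assoc]
  haveI noethL : ∀ m : {I : Ideal R // I.IsMaximal},
      IsNoetherianRing (Localization.AtPrime m.1) := fun m =>
    IsLocalization.isNoetherianRing m.1.primeCompl (Localization.AtPrime m.1) inferInstance
  haveI flatC : ∀ m : {I : Ideal R // I.IsMaximal},
      Module.Flat R (AdicCompletion (IsLocalRing.maximalIdeal (Localization.AtPrime m.1))
        (Localization.AtPrime m.1)) := by
    intro m
    haveI h2 : Module.Flat (Localization.AtPrime m.1)
        (AdicCompletion (IsLocalRing.maximalIdeal (Localization.AtPrime m.1))
          (Localization.AtPrime m.1)) :=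
      (AdicCompletion.flat_of_isNoetherian
        (IsLocalRing.maximalIdeal (Localization.AtPrime m.1)))
    exact Module.Flat.trans R (Localization.AtPrime m.1) _
  haveI flatPi : Module.Flat R (Π m : {I : Ideal R // I.IsMaximal},
      AdicCompletion (IsLocalRing.maximalIdeal (Localization.AtPrime m.1))
        (Localization.AtPrime m.1)) := MyAux.flat_pi _
  haveI flatP : Module.Flat R (ProdOfCompletedLocalizations R) := flatPi
  haveI ff : Module.FaithfullyFlat R (ProdOfCompletedLocalizations R) := by
    refine ⟨?_⟩
    intro n hn h
    set m : {I : Ideal R // I.IsMaximal} := ⟨n, hn⟩ with hm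
    set L := Localization.AtPrime m.1 with hL
    set J := IsLocalRing.maximalIdeal L with hJ
    let ψ := AdicCompletion.evalₐ J 1
    let θ : ProdOfCompletedLocalizations R →+* L ⧸ J ^ 1 :=
      ψ.toRingHom.comp (Pi.evalRingHom _ m)
    haveI : Nontrivial (L ⧸ J ^ 1) := by
      refine Ideal.Quotient.nontrivial_iff.mpr ?_
      rw [pow_one]
      exact Ideal.IsMaximal.ne_top (IsLocalRing.maximalIdeal.isMaximal L)
    have key : ∀ x ∈ (n • ⊤ : Submodule R (ProdOfCompletedLocalizations R)), θ x = 0 := by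
      intro x hx
      refine Submodule.smul_induction_on hx ?_ ?_
      · intro r hr y _
        have hsmul : r • y = toProdOfCompletedLocalizations R r * y :=
          funext fun m => hsmC m r (y m)
        rw [hsmul, RingHom.map_mul θ]
        have hzero : θ (toProdOfCompletedLocalizations R r) = 0 := by
          show ψ ((toProdOfCompletedLocalizations R r) m) = 0
          have hcomp : (toProdOfCompletedLocalizations R r) m
              = algebraMap L _ (algebraMap R L r) := rfl
          rw [hcomp, AlgHom.commutes, Ideal.Quotient.algebraMap_eq,
            Ideal.Quotient.eq_zero_iff_mem, pow_one]
          exact (IsLocalization.AtPrime.to_map_mem_maximal_iff L m.1 r).mpr hr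
        rw [hzero, zero_mul]
      · intro a b ha hb
        rw [RingHom.map_add θ, ha, hb, add_zero]
    have h1 : (1 : ProdOfCompletedLocalizations R)
        ∈ (n • ⊤ : Submodule R (ProdOfCompletedLocalizations R)) := by
      rw [h]; trivial
    have hone := key 1 h1
    rw [RingHom.map_one θ] at hone
    exact one_ne_zero hone
  refine ⟨ff, ?_⟩
  intro Q _ _
  have hmod : (inferInstance : Module R (ProdOfCompletedLocalizations R)) = Algebra.toModule :=
    Module.ext' _ _ fun r y => funext fun m => hsmC m r (y m)
  haveI ff2 : @Module.FaithfullyFlat R (ProdOfCompletedLocalizations R) _ _ Algebra.toModule := by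
    rw [← hmod]; exact ff
  exact MyAux.pure_of_faithfullyFlat (ProdOfCompletedLocalizations R) Q
end

section
/- Let S be a Noetherian ring, f_1, …, f_c, y_1, …, y_d a regular sequence on S, and let S → T be a faithfully flat ring map. Suppose each f_j admits a compatible system of p-power roots f_j^{1/p^e} in T. Then for every e ≥ 0, the sequence y_1, …, y_d is a regular sequence on T/(f_1^{1/p^e}, …, f_c^{1/p^e}), and hence also on the colimit T/(f_1^{1/p^∞}, …, f_c^{1/p^∞}) := colim_e T/(f_1^{1/p^e}, …, f_c^{1/p^e}). -/
universe u

universe v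

open RingTheory.Sequence Submodule Function Pointwise

namespace RegModAux

section Colon

variable {T : Type u} [CommRing T]

def CC (J : Ideal T) (zs : List T) : Prop :=
  ∀ i (hi : i < zs.length) (t : T),
    zs[i] * t ∈ J ⊔ Ideal.ofList (zs.take i) → t ∈ J ⊔ Ideal.ofList (zs.take i)

lemma cc_cons_iff {J : Ideal T} {w : T} {zs : List T} :
    CC J (w :: zs) ↔ (∀ t : T, w * t ∈ J → t ∈ J) ∧ CC (J ⊔ Ideal.span {w}) zs := by
  constructor
  · intro h
    refine ⟨fun t ht => ?_, fun i hi t ht => ?_⟩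
    · have := h 0 (by simp) t (by simpa using ht)
      simpa using this
    · have := h (i+1) (by simpa using hi) t
        (by simpa [List.take_succ_cons, Ideal.ofList_cons, ← sup_assoc] using ht)
      simpa [List.take_succ_cons, Ideal.ofList_cons, ← sup_assoc] using this
  · rintro ⟨h0, h1⟩ i hi t ht
    match i with
    | 0 => simpa using h0 t (by simpa using ht)
    | (i+1) =>
      have := h1 i (by simpa using hi) t
        (by simpa [List.take_succ_cons, Ideal.ofList_cons, ← sup_assoc] using ht)
      simpa [List.take_succ_cons, Ideal.ofList_cons, ← sup_assoc] using this

lemma main_colon {J : Ideal T} {x : T} {q : ℕ} (hq : 0 < q) {zs : List T}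
    (H : ∀ k, 0 < k → CC J (x ^ (k * q) :: zs)) :
    ∀ k, 0 < k → CC J (x ^ k :: zs) := by
  obtain ⟨q', rfl⟩ : ∃ q', q = q' + 1 := ⟨q - 1, (Nat.succ_pred_eq_of_pos hq).symm⟩
  have Hx : ∀ k, 0 < k → ∀ t : T, x ^ (k * (q' + 1)) * t ∈ J → t ∈ J :=
    fun k hk => (cc_cons_iff.mp (H k hk)).1
  have Hz : ∀ k, 0 < k → CC (J ⊔ Ideal.span {x ^ (k * (q' + 1))}) zs :=
    fun k hk => (cc_cons_iff.mp (H k hk)).2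
  have HxAll : ∀ (j : ℕ) (t : T), x ^ j * t ∈ J → t ∈ J := by
    intro j t ht
    rcases Nat.eq_zero_or_pos j with rfl | hj
    · simpa using ht
    · apply Hx j hj t
      have hle : j ≤ j * (q' + 1) := Nat.le_mul_of_pos_right _ (Nat.succ_pos q')
      have h : x ^ (j * (q' + 1)) * t = x ^ (j * (q' + 1) - j) * (x ^ j * t) := by
        rw [← mul_assoc, ← pow_add]
        congr 2
        omega
      rw [h]
      exact Ideal.mul_mem_left _ _ ht
  have regOfE : ∀ i (hi : i < zs.length),
      (∀ (j k : ℕ) (t : T), x ^ j * t ∈ J ⊔ Ideal.ofList (zs.take i) →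
        t ∈ J ⊔ Ideal.ofList (zs.take i) ⊔ Ideal.span {x ^ k}) →
      ∀ (k : ℕ), 0 < k → ∀ t : T,
        zs[i] * t ∈ J ⊔ Ideal.ofList (zs.take i) ⊔ Ideal.span {x ^ k} →
        t ∈ J ⊔ Ideal.ofList (zs.take i) ⊔ Ideal.span {x ^ k} := by
    intro i hi E k hk t ht
    rw [Submodule.mem_sup] at ht
    obtain ⟨w, hw, b, hb, hwb⟩ := ht
    rw [Ideal.mem_span_singleton'] at hb
    obtain ⟨c, rfl⟩ := hb
    have h1 : zs[i] * (x ^ (k * q') * t) ∈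
        (J ⊔ Ideal.ofList (zs.take i)) ⊔ Ideal.span {x ^ (k * (q' + 1))} := by
      have he : zs[i] * (x ^ (k * q') * t) =
          x ^ (k * q') * w + c * (x ^ (k * (q' + 1))) := by
        rw [show k * (q' + 1) = k * q' + k from by ring, pow_add]
        linear_combination -x ^ (k * q') * hwb
      rw [he]
      exact Submodule.add_mem _ (Submodule.mem_sup_left (Ideal.mul_mem_left _ _ hw))
        (Submodule.mem_sup_right (Ideal.mem_span_singleton'.mpr ⟨c, rfl⟩))
    rw [sup_right_comm] at h1
    have h2 := Hz k hk i hi (x ^ (k * q') * t) h1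
    rw [sup_right_comm] at h2
    rw [Submodule.mem_sup] at h2
    obtain ⟨w', hw', b', hb', hwb'⟩ := h2
    rw [Ideal.mem_span_singleton'] at hb'
    obtain ⟨c', rfl⟩ := hb'
    have h3 : x ^ (k * q') * (t - c' * x ^ k) ∈ J ⊔ Ideal.ofList (zs.take i) := by
      have he : x ^ (k * q') * (t - c' * x ^ k) = w' := by
        rw [show k * (q' + 1) = k * q' + k from by ring, pow_add] at hwb'
        linear_combination -hwb'
      rw [he]; exact hw'
    have h4 := E (k * q') k _ h3
    have he : t = (t - c' * x ^ k) + c' * x ^ k := by ring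
    rw [he]
    exact Submodule.add_mem _ h4
      (Submodule.mem_sup_right (Ideal.mem_span_singleton'.mpr ⟨c', rfl⟩))
  have key : ∀ i, i ≤ zs.length →
      ∀ (j k : ℕ) (t : T), x ^ j * t ∈ J ⊔ Ideal.ofList (zs.take i) →
        t ∈ J ⊔ Ideal.ofList (zs.take i) ⊔ Ideal.span {x ^ k} := by
    intro i
    induction i with
    | zero =>
      intro _ j k t ht
      simp only [List.take_zero, Ideal.ofList_nil, sup_bot_eq] at ht ⊢
      exact Submodule.mem_sup_left (HxAll j t ht)
    | succ i IH =>
      intro hi1 j k t ht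
      have hi : i < zs.length := by omega
      specialize IH (Nat.le_of_lt hi)
      have hZsucc : J ⊔ Ideal.ofList (zs.take (i + 1)) =
          (J ⊔ Ideal.ofList (zs.take i)) ⊔ Ideal.span {zs[i]} := by
        rw [List.take_succ, List.getElem?_eq_getElem hi]
        simp only [Option.toList_some, Ideal.ofList_append, Ideal.ofList_singleton]
        rw [sup_assoc]
      rcases Nat.eq_zero_or_pos j with rfl | hj
      · rw [pow_zero, one_mul] at ht
        exact Submodule.mem_sup_left ht
      · rw [hZsucc] at ht
        rw [Submodule.mem_sup] at ht
        obtain ⟨w, hw, b, hb, hwb⟩ := ht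
        rw [Ideal.mem_span_singleton'] at hb
        obtain ⟨a, rfl⟩ := hb
        have h1 : zs[i] * a ∈ J ⊔ Ideal.ofList (zs.take i) ⊔ Ideal.span {x ^ j} := by
          have he : zs[i] * a = x ^ j * t - w := by linear_combination hwb
          rw [he]
          exact Submodule.sub_mem _
            (Submodule.mem_sup_right (Ideal.mem_span_singleton'.mpr ⟨t, by ring⟩))
            (Submodule.mem_sup_left hw)
        have h2 := regOfE i hi IH j hj a h1
        rw [Submodule.mem_sup] at h2
        obtain ⟨w', hw', b', hb', hwb'⟩ := h2
        rw [Ideal.mem_span_singleton'] at hb'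
        obtain ⟨bb, rfl⟩ := hb'
        have h3 : x ^ j * (t - bb * zs[i]) ∈ J ⊔ Ideal.ofList (zs.take i) := by
          have he : x ^ j * (t - bb * zs[i]) = w + w' * zs[i] := by
            linear_combination -hwb - zs[i] * hwb'
          rw [he]
          exact Ideal.add_mem _ hw (Ideal.mul_mem_right _ _ hw')
        have h4 := IH j k _ h3
        rw [hZsucc, sup_right_comm]
        have he : t = (t - bb * zs[i]) + bb * zs[i] := by ring
        rw [he]
        refine Submodule.add_mem _ (Submodule.mem_sup_left h4) ?_
        exact Submodule.mem_sup_right (Ideal.mem_span_singleton'.mpr ⟨bb, rfl⟩)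
  intro k hk
  rw [cc_cons_iff]
  refine ⟨fun t ht => HxAll k t ht, fun i hi t ht => ?_⟩
  rw [sup_right_comm] at ht
  have h := regOfE i hi (key i (Nat.le_of_lt hi)) k hk t ht
  rwa [sup_right_comm] at h

lemma smul_top_quot_eq (J I : Ideal T) :
    (I • ⊤ : Submodule T (T ⧸ J)) = Submodule.map J.mkQ I := by
  conv_lhs => rw [show (⊤ : Submodule T (T ⧸ J)) = Submodule.map J.mkQ ⊤ by
    rw [Submodule.map_top, Submodule.range_mkQ]]
  rw [← Submodule.map_smul'', smul_eq_mul, Ideal.mul_top]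

lemma mem_smul_top_quot_iff (J I : Ideal T) (t : T) :
    Ideal.Quotient.mk J t ∈ (I • ⊤ : Submodule T (T ⧸ J)) ↔ t ∈ J ⊔ I := by
  rw [smul_top_quot_eq, Submodule.mem_map]
  constructor
  · rintro ⟨i, hi, hit⟩
    have h : i - t ∈ J := (Submodule.Quotient.eq J).mp hit
    have : t = -(i - t) + i := by ring
    rw [this]
    exact Submodule.add_mem _ (Submodule.mem_sup_left (neg_mem h)) (Submodule.mem_sup_right hi)
  · intro ht
    rw [Submodule.mem_sup] at ht
    obtain ⟨j, hj, i, hi, rfl⟩ := ht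
    exact ⟨i, hi, (Submodule.Quotient.eq J).mpr (by simpa using neg_mem hj)⟩

lemma top_eq_smul_top_quot_iff (J I : Ideal T) :
    ((⊤ : Submodule T (T ⧸ J)) = I • ⊤) ↔ J ⊔ I = ⊤ := by
  constructor
  · intro h
    rw [Ideal.eq_top_iff_one, ← mem_smul_top_quot_iff J I, ← h]
    trivial
  · intro h
    refine (Submodule.eq_top_iff'.mpr fun m => ?_).symm
    obtain ⟨t, rfl⟩ := Ideal.Quotient.mk_surjective m
    rw [mem_smul_top_quot_iff, h]
    trivial

lemma isWeaklyRegular_quot_iff (J : Ideal T) (zs : List T) :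
    IsWeaklyRegular (T ⧸ J) zs ↔ CC J zs := by
  rw [isWeaklyRegular_iff]
  refine forall_congr' fun i => forall_congr' fun hi => ?_
  set I := Ideal.ofList (zs.take i) with hI
  constructor
  · intro hreg t ht
    have h0 : zs[i] • (Submodule.Quotient.mk (Ideal.Quotient.mk J t) :
        (T ⧸ J) ⧸ (I • ⊤ : Submodule T (T ⧸ J))) = zs[i] • 0 := by
      rw [smul_zero, ← Submodule.Quotient.mk_smul, Submodule.Quotient.mk_eq_zero]
      show Ideal.Quotient.mk J (zs[i] * t) ∈ _
      rw [mem_smul_top_quot_iff]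
      exact ht
    have := hreg h0
    rw [Submodule.Quotient.mk_eq_zero] at this
    rwa [mem_smul_top_quot_iff] at this
  · intro hcc u v huv
    obtain ⟨u', rfl⟩ := Submodule.Quotient.mk_surjective _ u
    obtain ⟨v', rfl⟩ := Submodule.Quotient.mk_surjective _ v
    obtain ⟨tu, rfl⟩ := Ideal.Quotient.mk_surjective u'
    obtain ⟨tv, rfl⟩ := Ideal.Quotient.mk_surjective v'
    beta_reduce at huv
    rw [← Submodule.Quotient.mk_smul, ← Submodule.Quotient.mk_smul,
      Submodule.Quotient.eq] at huv
    have h1 : zs[i] • Ideal.Quotient.mk J tu - zs[i] • Ideal.Quotient.mk J tv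
        = Ideal.Quotient.mk J (zs[i] * (tu - tv)) := by
      rw [mul_sub]
      rfl
    rw [h1, mem_smul_top_quot_iff] at huv
    have h2 := hcc (tu - tv) huv
    rw [Submodule.Quotient.eq]
    show Ideal.Quotient.mk J tu - Ideal.Quotient.mk J tv ∈ _
    rw [← map_sub, mem_smul_top_quot_iff]
    exact h2

lemma isRegular_quot_iff (J : Ideal T) (zs : List T) :
    IsRegular (T ⧸ J) zs ↔ CC J zs ∧ J ⊔ Ideal.ofList zs ≠ ⊤ := by
  rw [isRegular_iff, isWeaklyRegular_quot_iff]
  exact and_congr Iff.rfl (by rw [ne_eq, top_eq_smul_top_quot_iff])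

lemma rec_colon : ∀ (c : ℕ) (g : Fin c → T) (J : Ideal T) (zs : List T) {q : ℕ} (_hq : 0 < q)
    (_H : ∀ a : Fin c → ℕ, (∀ j, 0 < a j) →
      CC J (List.ofFn (fun j => g j ^ (a j * q)) ++ zs)),
    CC (J ⊔ Ideal.span (Set.range g)) zs := by
  intro c
  induction c with
  | zero =>
    intro g J zs q hq H
    have h := H (fun _ => 1) (fun j => Nat.one_pos)
    simp only [List.ofFn_zero, List.nil_append] at h
    have hg : Ideal.span (Set.range g) = ⊥ := by
      rw [Set.range_eq_empty, Ideal.span_empty]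
    rwa [hg, sup_bot_eq]
  | succ c IHc =>
    intro g J zs q hq H
    have H0 : ∀ a' : Fin c → ℕ, (∀ j, 0 < a' j) → ∀ k, 0 < k →
        CC J (g 0 ^ (k * q) :: (List.ofFn (fun j : Fin c => g j.succ ^ (a' j * q)) ++ zs)) := by
      intro a' ha' k hk
      have h := H (Fin.cons k a') (fun j => by
        refine Fin.cases ?_ ?_ j
        · simpa using hk
        · intro j'; simpa using ha' j')
      simpa [List.ofFn_succ, Fin.cons_zero, Fin.cons_succ] using h
    have H1 : ∀ a' : Fin c → ℕ, (∀ j, 0 < a' j) →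
        CC (J ⊔ Ideal.span {g 0}) (List.ofFn (fun j : Fin c => g j.succ ^ (a' j * q)) ++ zs) := by
      intro a' ha'
      have h := main_colon hq (H0 a' ha') 1 Nat.one_pos
      rw [pow_one] at h
      exact (cc_cons_iff.mp h).2
    have h2 := IHc (fun j => g j.succ) (J ⊔ Ideal.span {g 0}) zs hq H1
    rw [sup_assoc] at h2
    have he : Ideal.span {g 0} ⊔ Ideal.span (Set.range fun j : Fin c => g j.succ)
        = Ideal.span (Set.range g) := by
      rw [← Ideal.span_union]
      congr 1
      rw [Set.singleton_union]
      exact (Fin.range_fin_succ g).symm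
    rwa [he] at h2


lemma cc_bot_of_isWeaklyRegular {zs : List T} (h : IsWeaklyRegular T zs) :
    CC (⊥ : Ideal T) zs := by
  rw [← isWeaklyRegular_quot_iff]
  have e : T ≃ₗ[T] (T ⧸ (⊥ : Ideal T)) := (Submodule.quotEquivOfEqBot ⊥ rfl).symm
  exact (e.isWeaklyRegular_congr zs).mp h

end Colon

section Modules

variable {R : Type u} [CommRing R]

lemma mem_smul_top_iff'' {M : Type v} [AddCommGroup M] [Module R M] (r : R) (m : M) :
    m ∈ r • (⊤ : Submodule R M) ↔ ∃ m', r • m' = m := by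
  constructor
  · intro hm
    obtain ⟨m', -, hm'⟩ := Submodule.mem_map.mp hm
    exact ⟨m', hm'⟩
  · rintro ⟨m', rfl⟩
    exact Submodule.smul_mem_pointwise_smul m' r ⊤ trivial

/-- If a sequence is weakly regular on the outer modules of a short exact
sequence then it is weakly regular on the middle. -/
lemma isWeaklyRegular_of_exact {zs : List R} :
    ∀ {A B C : Type v} [AddCommGroup A] [AddCommGroup B] [AddCommGroup C]
      [Module R A] [Module R B] [Module R C]
      (f : A →ₗ[R] B) (g : B →ₗ[R] C)
      (hf : Injective f) (hfg : Exact f g) (hg : Surjective g),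
      IsWeaklyRegular A zs → IsWeaklyRegular C zs → IsWeaklyRegular B zs := by
  induction zs with
  | nil => intro A B C _ _ _ _ _ _ f g hf hfg hg hA hC; exact IsWeaklyRegular.nil R B
  | cons z zs ih =>
    intro A B C _ _ _ _ _ _ f g hf hfg hg hA hC
    rw [isWeaklyRegular_cons_iff] at hA hC ⊢
    obtain ⟨hA1, hA2⟩ := hA
    obtain ⟨hC1, hC2⟩ := hC
    have hB1 : IsSMulRegular B z := by
      intro b b' hbb
      beta_reduce at hbb
      have hsub : z • (b - b') = 0 := by rw [smul_sub, hbb, sub_self]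
      have hgb : z • g (b - b') = 0 := by rw [← map_smul, hsub, map_zero]
      have h0 : g (b - b') = 0 := hC1 (by simpa using hgb)
      obtain ⟨a, ha⟩ := (hfg (b - b')).mp h0
      have hfz : f (z • a) = f 0 := by rw [map_smul, ha, hsub, map_zero]
      have ha0 : a = 0 := hA1 (by simpa using hf hfz)
      have : b - b' = 0 := by rw [← ha, ha0, map_zero]
      exact sub_eq_zero.mp this
    refine ⟨hB1, ?_⟩
    refine ih (QuotSMulTop.map z f) (QuotSMulTop.map z g) ?_ ?_ ?_ hA2 hC2
    · rw [injective_iff_map_eq_zero]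
      intro am ham
      obtain ⟨a, rfl⟩ := Submodule.Quotient.mk_surjective _ am
      rw [QuotSMulTop.map_apply_mk, Submodule.Quotient.mk_eq_zero] at ham
      rw [Submodule.Quotient.mk_eq_zero]
      obtain ⟨b, hb⟩ := (mem_smul_top_iff'' z (f a)).mp ham
      have hgb : z • g b = 0 := by
        rw [← map_smul, hb, hfg.apply_apply_eq_zero a]
      have h0 : g b = 0 := hC1 (by simpa using hgb)
      obtain ⟨a', ha'⟩ := (hfg b).mp h0
      have : f (z • a') = f a := by rw [map_smul, ha', hb]
      rw [← hf this]
      exact (mem_smul_top_iff'' z _).mpr ⟨a', rfl⟩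
    · exact QuotSMulTop.map_exact z hfg hg
    · exact QuotSMulTop.map_surjective z hg

lemma smul_top_le_pow_succ {M : Type v} [AddCommGroup M] [Module R M] (x : R) (n : ℕ) :
    (x ^ (n+1)) • (⊤ : Submodule R M) ≤ x • ⊤ := by
  intro m hm
  obtain ⟨m', rfl⟩ := (mem_smul_top_iff'' _ m).mp hm
  refine (mem_smul_top_iff'' _ _).mpr ⟨x ^ n • m', ?_⟩
  rw [smul_smul, ← pow_succ']

lemma isWeaklyRegular_quotSMulTop_pow {M : Type v} [AddCommGroup M] [Module R M]
    {x : R} (hx : IsSMulRegular M x) {zs : List R}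
    (h : IsWeaklyRegular (QuotSMulTop x M) zs) :
    ∀ n : ℕ, 0 < n → IsWeaklyRegular (QuotSMulTop (x ^ n) M) zs := by
  intro n hn
  induction n with
  | zero => omega
  | succ n ihn =>
    rcases Nat.eq_zero_or_pos n with rfl | hn'
    · have e : QuotSMulTop (x ^ (0 + 1)) M ≃ₗ[R] QuotSMulTop x M :=
        Submodule.quotEquivOfEq _ _ (by rw [pow_one])
      exact (e.isWeaklyRegular_congr zs).mpr h
    · specialize ihn hn'
      have hcond1 : (x ^ n) • (⊤ : Submodule R M) ≤
          Submodule.comap (LinearMap.lsmul R M x) ((x ^ (n+1)) • ⊤) := by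
        intro m hm
        obtain ⟨m', rfl⟩ := (mem_smul_top_iff'' _ m).mp hm
        simp only [Submodule.mem_comap, LinearMap.lsmul_apply]
        refine (mem_smul_top_iff'' _ _).mpr ⟨m', ?_⟩
        rw [smul_smul, ← pow_succ']
      have hcond2 : (x ^ (n+1)) • (⊤ : Submodule R M) ≤
          Submodule.comap LinearMap.id (x • ⊤) := by
        intro m hm
        simpa using smul_top_le_pow_succ x n hm
      set f : QuotSMulTop (x ^ n) M →ₗ[R] QuotSMulTop (x ^ (n+1)) M :=
        Submodule.mapQ _ _ (LinearMap.lsmul R M x) hcond1 with hfdef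
      set g : QuotSMulTop (x ^ (n+1)) M →ₗ[R] QuotSMulTop x M :=
        Submodule.mapQ _ _ LinearMap.id hcond2 with hgdef
      refine isWeaklyRegular_of_exact f g ?_ ?_ ?_ ihn h
      · rw [injective_iff_map_eq_zero]
        intro mm hmm
        obtain ⟨m, rfl⟩ := Submodule.Quotient.mk_surjective _ mm
        rw [hfdef, Submodule.mapQ_apply, LinearMap.lsmul_apply,
          Submodule.Quotient.mk_eq_zero] at hmm
        rw [Submodule.Quotient.mk_eq_zero]
        obtain ⟨m', hm'⟩ := (mem_smul_top_iff'' _ _).mp hmm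
        have heq : x • (x ^ n • m') = x • m := by
          rw [smul_smul, ← pow_succ']
          exact hm'
        rw [← hx heq]
        exact (mem_smul_top_iff'' _ _).mpr ⟨m', rfl⟩
      · intro bm
        obtain ⟨m, rfl⟩ := Submodule.Quotient.mk_surjective _ bm
        constructor
        · intro hmm
          rw [hgdef, Submodule.mapQ_apply, LinearMap.id_apply,
            Submodule.Quotient.mk_eq_zero] at hmm
          obtain ⟨m', rfl⟩ := (mem_smul_top_iff'' _ _).mp hmm
          exact ⟨Submodule.Quotient.mk m', by
            rw [hfdef, Submodule.mapQ_apply, LinearMap.lsmul_apply]⟩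
        · rintro ⟨am, ham⟩
          obtain ⟨a, rfl⟩ := Submodule.Quotient.mk_surjective _ am
          rw [hfdef, Submodule.mapQ_apply, LinearMap.lsmul_apply] at ham
          rw [hgdef, Submodule.mapQ_apply, LinearMap.id_apply,
            Submodule.Quotient.mk_eq_zero]
          have hdiff : m - x • a ∈ (x ^ (n+1)) • (⊤ : Submodule R M) :=
            (Submodule.Quotient.eq _).mp ham.symm
          have h1 : m - x • a ∈ x • (⊤ : Submodule R M) := smul_top_le_pow_succ x n hdiff
          have h2 : x • a ∈ x • (⊤ : Submodule R M) :=
            (mem_smul_top_iff'' _ _).mpr ⟨a, rfl⟩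
          simpa using Submodule.add_mem _ h1 h2
      · intro mm
        obtain ⟨m, rfl⟩ := Submodule.Quotient.mk_surjective _ mm
        exact ⟨Submodule.Quotient.mk m, by
          rw [hgdef, Submodule.mapQ_apply, LinearMap.id_apply]⟩

lemma isWeaklyRegular_pow_ofFn :
    ∀ (c : ℕ) {M : Type v} [AddCommGroup M] [Module R M]
      (g : Fin c → R) (zs : List R) (a : Fin c → ℕ) (_ : ∀ j, 0 < a j),
      IsWeaklyRegular M (List.ofFn g ++ zs) →
      IsWeaklyRegular M (List.ofFn (fun j => g j ^ a j) ++ zs) := by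
  intro c
  induction c with
  | zero => intro M _ _ g zs a ha h; simpa using h
  | succ c ihc =>
    intro M _ _ g zs a ha h
    rw [List.ofFn_succ, List.cons_append, isWeaklyRegular_cons_iff] at h
    obtain ⟨h1, h2⟩ := h
    rw [List.ofFn_succ, List.cons_append, isWeaklyRegular_cons_iff]
    exact ⟨h1.pow (a 0),
      isWeaklyRegular_quotSMulTop_pow h1
        (ihc (fun j => g j.succ) zs (fun j => a j.succ) (fun j => ha j.succ) h2)
        (a 0) (ha 0)⟩


end Modules

section BaseChange

open scoped TensorProduct

variable {S T : Type u} [CommRing S] [CommRing T] [Algebra S T]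

lemma isWeaklyRegular_baseChange [Module.Flat S T] {l : List S}
    (h : IsWeaklyRegular S l) :
    IsWeaklyRegular T (l.map (algebraMap S T)) := by
  have h1 : IsWeaklyRegular (T ⊗[S] S) l := h.isWeaklyRegular_lTensor
  have h2 : IsWeaklyRegular T l := ((TensorProduct.rid S T).isWeaklyRegular_congr l).mp h1
  exact (isWeaklyRegular_map_algebraMap_iff T T l).mpr h2

lemma map_ne_top [Module.FaithfullyFlat S T] {I : Ideal S} (hI : I ≠ ⊤) :
    Ideal.map (algebraMap S T) I ≠ ⊤ := by
  intro htop
  have h1 : I • (⊤ : Submodule S T) ≠ ⊤ :=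
    ((Module.FaithfullyFlat.iff_flat_and_proper_ideal S T).mp inferInstance).2 I hI
  apply h1
  rw [Ideal.smul_top_eq_map, htop]
  rfl

end BaseChange

end RegModAux

open RingTheory.Sequence in
/-- Let `S` be a Noetherian ring, `f₁, …, f_c, y₁, …, y_d` a regular sequence on `S`, and
`S → T` a faithfully flat ring map.  Suppose each `f_j` admits a compatible system of
`p`-power roots `f_j^{1/p^e}` in `T`.  Then for every `e ≥ 0` the sequence `y₁, …, y_d` is
regular on `T/(f₁^{1/p^e}, …, f_c^{1/p^e})`, and hence also on the colimit
`T/(f₁^{1/p^∞}, …, f_c^{1/p^∞}) = T/(f_j^{1/p^e} : j, e)`. -/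
theorem regular_sequence_mod_p_power_roots
    (p c d : ℕ) (S T : Type u) [CommRing S] [IsNoetherianRing S]
    [CommRing T] [Algebra S T] [Module.FaithfullyFlat S T]
    (f : Fin c → S) (y : Fin d → S)
    (hreg : IsRegular S (List.ofFn f ++ List.ofFn y))
    (r : Fin c → ℕ → T)
    (hr0 : ∀ j, r j 0 = algebraMap S T (f j))
    (hrp : ∀ j e, (r j (e + 1)) ^ p = r j e) :
    (∀ e : ℕ,
      IsRegular (T ⧸ Ideal.span (Set.range fun j => r j e))
        ((List.ofFn y).map (algebraMap S T))) ∧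
      IsRegular (T ⧸ Ideal.span (Set.range fun je : Fin c × ℕ => r je.1 je.2))
        ((List.ofFn y).map (algebraMap S T)) := by
  classical
  have hT_ne : Ideal.map (algebraMap S T)
      (Ideal.ofList (List.ofFn f ++ List.ofFn y)) ≠ ⊤ := by
    apply RegModAux.map_ne_top
    intro htop
    exact hreg.top_ne_smul (by rw [htop, top_smul])
  have hfmem : ∀ j, algebraMap S T (f j) ∈
      Ideal.map (algebraMap S T) (Ideal.ofList (List.ofFn f ++ List.ofFn y)) := by
    intro j
    refine Ideal.mem_map_of_mem _ (Ideal.subset_span ?_)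
    show f j ∈ List.ofFn f ++ List.ofFn y
    exact List.mem_append.mpr (Or.inl (List.mem_ofFn.mpr ⟨j, rfl⟩))
  have hroot : ∀ j e, r j e ^ (p ^ e) = algebraMap S T (f j) := by
    intro j e
    induction e with
    | zero => simpa using hr0 j
    | succ e ih =>
      rw [pow_succ', pow_mul, hrp j e, ih]
  -- the key construction, for a fixed stage
  have KEY : ∀ (g : Fin c → T) (q : ℕ), 0 < q →
      (∀ j, g j ^ q = algebraMap S T (f j)) →
      RegModAux.CC (Ideal.span (Set.range g)) ((List.ofFn y).map (algebraMap S T)) ∧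
        Ideal.span (Set.range g) ⊔
          Ideal.ofList ((List.ofFn y).map (algebraMap S T)) ≠ ⊤ := by
    intro g q hq hgq
    have hwr : ∀ a : Fin c → ℕ, (∀ j, 0 < a j) →
        RegModAux.CC (⊥ : Ideal T)
          (List.ofFn (fun j => g j ^ (a j * q)) ++ (List.ofFn y).map (algebraMap S T)) := by
      intro a ha
      have h1 : IsWeaklyRegular S (List.ofFn (fun j => f j ^ a j) ++ List.ofFn y) :=
        RegModAux.isWeaklyRegular_pow_ofFn c f (List.ofFn y) a ha hreg.toIsWeaklyRegular
      have h2 := RegModAux.isWeaklyRegular_baseChange (T := T) h1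
      rw [List.map_append] at h2
      have hlist : List.ofFn (fun j => g j ^ (a j * q)) =
          (List.ofFn (fun j => f j ^ a j)).map (algebraMap S T) := by
        rw [List.map_ofFn]
        refine congrArg List.ofFn (funext fun j => ?_)
        show g j ^ (a j * q) = algebraMap S T (f j ^ a j)
        calc g j ^ (a j * q) = (g j ^ q) ^ a j := by rw [← pow_mul, mul_comm]
          _ = (algebraMap S T (f j)) ^ a j := by rw [hgq j]
          _ = algebraMap S T (f j ^ a j) := (map_pow _ _ _).symm
      rw [hlist]
      exact RegModAux.cc_bot_of_isWeaklyRegular h2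
    have hcc := RegModAux.rec_colon c g ⊥ ((List.ofFn y).map (algebraMap S T)) hq hwr
    rw [bot_sup_eq] at hcc
    refine ⟨hcc, ?_⟩
    have hle : Ideal.span (Set.range g) ⊔
        Ideal.ofList ((List.ofFn y).map (algebraMap S T)) ≤
        (Ideal.map (algebraMap S T) (Ideal.ofList (List.ofFn f ++ List.ofFn y))).radical := by
      apply sup_le
      · rw [Ideal.span_le]
        rintro t ⟨j, rfl⟩
        exact Ideal.mem_radical_iff.mpr ⟨q, by rw [hgq j]; exact hfmem j⟩
      · refine le_trans ?_ Ideal.le_radical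
        rw [← Ideal.map_ofList]
        apply Ideal.map_mono
        apply Ideal.span_mono
        intro t ht
        show t ∈ List.ofFn f ++ List.ofFn y
        exact List.mem_append.mpr (Or.inr ht)
    intro htop
    exact hT_ne (Ideal.radical_eq_top.mp (top_le_iff.mp (htop ▸ hle)))
  rcases Nat.eq_zero_or_pos p with rfl | hp
  · -- p = 0
    rcases Nat.eq_zero_or_pos c with rfl | hc
    · -- c = 0 : all the ideals are ⊥
      have hbot := KEY (fun j => r j 0) 1 Nat.one_pos (fun j => j.elim0)
      have hsp : Ideal.span (Set.range fun j : Fin 0 => r j 0) = ⊥ := by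
        rw [Set.range_eq_empty, Ideal.span_empty]
      rw [hsp] at hbot
      constructor
      · intro e
        rw [RegModAux.isRegular_quot_iff]
        have hsp' : Ideal.span (Set.range fun j : Fin 0 => r j e) = ⊥ := by
          rw [Set.range_eq_empty, Ideal.span_empty]
        rw [hsp']
        exact hbot
      · rw [RegModAux.isRegular_quot_iff]
        have hsp' : Ideal.span (Set.range fun je : Fin 0 × ℕ => r je.1 je.2) = ⊥ := by
          rw [Set.range_eq_empty, Ideal.span_empty]
        rw [hsp']
        exact hbot
    · -- c > 0 : contradictory hypotheses
      exfalso
      have h1 : r ⟨0, hc⟩ 0 = 1 := by rw [← hrp ⟨0, hc⟩ 0, pow_zero]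
      have h2 : algebraMap S T (f ⟨0, hc⟩) = 1 := by rw [← hr0, h1]
      apply hT_ne
      rw [Ideal.eq_top_iff_one, ← h2]
      exact hfmem ⟨0, hc⟩
  · -- p > 0
    have hpart1 : ∀ e, RegModAux.CC (Ideal.span (Set.range fun j => r j e))
        ((List.ofFn y).map (algebraMap S T)) ∧
        Ideal.span (Set.range fun j => r j e) ⊔
          Ideal.ofList ((List.ofFn y).map (algebraMap S T)) ≠ ⊤ :=
      fun e => KEY (fun j => r j e) (p ^ e) (pow_pos hp e) (fun j => hroot j e)
    have hmono : Monotone (fun e => Ideal.span (Set.range fun j => r j e)) := by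
      apply monotone_nat_of_le_succ
      intro e
      rw [Ideal.span_le]
      rintro t ⟨j, rfl⟩
      show r j e ∈ Ideal.span (Set.range fun j => r j (e + 1))
      rw [← hrp j e]
      exact Ideal.pow_mem_of_mem _ (Ideal.subset_span (Set.mem_range_self j)) p hp
    have hJsup : Ideal.span (Set.range fun je : Fin c × ℕ => r je.1 je.2) =
        ⨆ e, Ideal.span (Set.range fun j => r j e) := by
      apply le_antisymm
      · rw [Ideal.span_le]
        rintro t ⟨⟨j, e⟩, rfl⟩
        exact (le_iSup (fun e => Ideal.span (Set.range fun j => r j e)) e)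
          (Ideal.subset_span (Set.mem_range_self j))
      · exact iSup_le fun e => Ideal.span_mono (by rintro t ⟨j, rfl⟩; exact Set.mem_range_self (j, e))
    constructor
    · intro e
      rw [RegModAux.isRegular_quot_iff]
      exact hpart1 e
    · rw [RegModAux.isRegular_quot_iff]
      constructor
      · intro i hi t ht
        rw [hJsup, iSup_sup] at ht ⊢
        have hdir : Directed (· ≤ ·) (fun e => Ideal.span (Set.range fun j => r j e) ⊔
            Ideal.ofList ((((List.ofFn y).map (algebraMap S T))).take i)) :=
          (Monotone.sup hmono monotone_const).directed_le
        rw [Submodule.mem_iSup_of_directed _ hdir] at ht ⊢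
        obtain ⟨e, he⟩ := ht
        exact ⟨e, (hpart1 e).1 i hi t he⟩
      · intro htop
        rw [hJsup, iSup_sup] at htop
        have hdir : Directed (· ≤ ·) (fun e => Ideal.span (Set.range fun j => r j e) ⊔
            Ideal.ofList ((List.ofFn y).map (algebraMap S T))) :=
          (Monotone.sup hmono monotone_const).directed_le
        have h1 : (1 : T) ∈ ⨆ e, Ideal.span (Set.range fun j => r j e) ⊔
            Ideal.ofList ((List.ofFn y).map (algebraMap S T)) := htop ▸ Submodule.mem_top
        rw [Submodule.mem_iSup_of_directed _ hdir] at h1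
        obtain ⟨e, he⟩ := h1
        exact (hpart1 e).2 ((Ideal.eq_top_iff_one _).mpr he)
end
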